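/- If N is a multiple-labelled network realizing a ploidy profile m and N' is obtained from N by a single split operation, then N' is a multiple-labelled network realizing m. -/

import Mathlib

/-!
Formalization preamble for "Autopolyploidy, allopolyploidy, and phylogenetic
networks with horizontal arcs" (Huber & Maher).

Networks are finite directed multigraphs whose vertices and arcs are (finitely
many) natural numbers; parallel arcs (beads) are allowed, loops are not.
-/

namespace Ploidy

/-- A finite directed multigraph: both vertex names and arc identifiers are
natural numbers; `src`/`tgt` give the endpoints of each arc. -/
structure Net where
  verts : Finset ℕ
  arcs : Finset ℕ
  src : ℕ → ℕ
  tgt : ℕ → ℕ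

/-- The indegree of a vertex. -/
def inDeg (G : Net) (v : ℕ) : ℕ := (G.arcs.filter fun a => G.tgt a = v).card

/-- The outdegree of a vertex. -/
def outDeg (G : Net) (v : ℕ) : ℕ := (G.arcs.filter fun a => G.src a = v).card

def IsLeafN (G : Net) (v : ℕ) : Prop := v ∈ G.verts ∧ inDeg G v = 1 ∧ outDeg G v = 0
def IsTreeVert (G : Net) (v : ℕ) : Prop := v ∈ G.verts ∧ inDeg G v = 1 ∧ outDeg G v = 2
def IsReticN (G : Net) (v : ℕ) : Prop := v ∈ G.verts ∧ inDeg G v = 2 ∧ outDeg G v = 1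
def IsRootN (G : Net) (v : ℕ) : Prop := v ∈ G.verts ∧ inDeg G v = 0

instance (G : Net) (v : ℕ) : Decidable (IsLeafN G v) :=
  decidable_of_iff (v ∈ G.verts ∧ inDeg G v = 1 ∧ outDeg G v = 0) Iff.rfl

/-- `IsWalk G l u v`: the list of arcs `l` forms a directed walk from `u` to `v`. -/
def IsWalk (G : Net) : List ℕ → ℕ → ℕ → Prop
  | [], u, v => u = v ∧ u ∈ G.verts
  | a :: l, u, v => a ∈ G.arcs ∧ G.src a = u ∧ IsWalk G l (G.tgt a) v

/-- The number of directed paths from `u` to `v` (in a DAG every directed walk is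
a path, and there are finitely many of them). -/
noncomputable def nPaths (G : Net) (u v : ℕ) : ℕ := Set.ncard {l : List ℕ | IsWalk G l u v}

/-- `a` is an arc from `u` to `v`. -/
def ArcFT (G : Net) (a u v : ℕ) : Prop := a ∈ G.arcs ∧ G.src a = u ∧ G.tgt a = v

/-- `u` is a parent of `v`. -/
def IsParent (G : Net) (u v : ℕ) : Prop := ∃ a, ArcFT G a u v

/-- `w` is below `u` (reachable from `u` by a directed walk, possibly `u = w`). -/
def BelowV (G : Net) (u w : ℕ) : Prop := ∃ l, IsWalk G l u w

/-- `v` is an end vertex of a pair of parallel arcs (a bead). -/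
def InBead (G : Net) (v : ℕ) : Prop :=
  ∃ a b, a ∈ G.arcs ∧ b ∈ G.arcs ∧ a ≠ b ∧ G.src a = G.src b ∧ G.tgt a = G.tgt b ∧
    (G.src a = v ∨ G.tgt a = v)

/-- `G` is beadless: there is no pair of parallel arcs. -/
def Beadless (G : Net) : Prop := ∀ v, ¬ InBead G v

/-- `G` is a (rooted, binary) phylogenetic network in the sense of Huber–Maher:
a rooted DAG, possibly with beads but without loops, with a unique root of
indegree 0 and outdegree 2, all of whose other vertices are leaves, tree
vertices or reticulation vertices. -/
structure IsPhylo (G : Net) : Prop where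
  src_mem : ∀ a ∈ G.arcs, G.src a ∈ G.verts
  tgt_mem : ∀ a ∈ G.arcs, G.tgt a ∈ G.verts
  no_loop : ∀ a ∈ G.arcs, G.src a ≠ G.tgt a
  acyclic : ∀ (v : ℕ) (l : List ℕ), l ≠ [] → ¬ IsWalk G l v v
  root_exu : ∃! r, IsRootN G r
  root_out : ∀ r, IsRootN G r → outDeg G r = 2
  types : ∀ v ∈ G.verts, IsRootN G v ∨ IsLeafN G v ∨ IsTreeVert G v ∨ IsReticN G v

/-- An HGT-consistent labelling: (P1), (P2) and (P3) (the latter required only for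
reticulation vertices not contained in beads). -/
def IsHGT (G : Net) (t : ℕ → ℝ) : Prop :=
  (∀ v ∈ G.verts, 0 ≤ t v) ∧
  (∀ a ∈ G.arcs,
      (IsReticN G (G.tgt a) → t (G.src a) ≤ t (G.tgt a)) ∧
      (¬ IsReticN G (G.tgt a) → t (G.src a) < t (G.tgt a))) ∧
  (∀ u ∈ G.verts, ¬ IsLeafN G u → ∃ v, IsParent G u v ∧ t u < t v) ∧
  (∀ v, IsReticN G v → ¬ InBead G v → ∃! u, IsParent G u v ∧ t u = t v)

/-- `v` is a reticulation vertex (not contained in a bead) violating (P3). -/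
def ViolatesP3 (G : Net) (t : ℕ → ℝ) (v : ℕ) : Prop :=
  IsReticN G v ∧ ¬ InBead G v ∧ ¬ (∃! u, IsParent G u v ∧ t u = t v)

/-- A weak HGT-consistent labelling: (P1), (P2) and (P3'): at most one reticulation
vertex `v`, with distinct parents `u₁, u₂` such that `u₂` is below `u₁` and
`t u₁ ≠ t v ≠ t u₂`, violates (P3). -/
def IsWeakHGT (G : Net) (t : ℕ → ℝ) : Prop :=
  (∀ v ∈ G.verts, 0 ≤ t v) ∧
  (∀ a ∈ G.arcs,
      (IsReticN G (G.tgt a) → t (G.src a) ≤ t (G.tgt a)) ∧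
      (¬ IsReticN G (G.tgt a) → t (G.src a) < t (G.tgt a))) ∧
  (∀ u ∈ G.verts, ¬ IsLeafN G u → ∃ v, IsParent G u v ∧ t u < t v) ∧
  (∀ v w, ViolatesP3 G t v → ViolatesP3 G t w → v = w) ∧
  (∀ v, ViolatesP3 G t v →
      ∃ u1 u2, u1 ≠ u2 ∧ IsParent G u1 v ∧ IsParent G u2 v ∧ BelowV G u1 u2 ∧
        t u1 ≠ t v ∧ t u2 ≠ t v)

/-! ### Ploidy profiles and the simplification sequence -/

/-- A ploidy profile: a nonempty descending list of positive integers; the entry at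
(0-based) position `i` is indexed by the taxon `x_{i+1}`. -/
def IsProfileL (l : List ℕ) : Prop := l ≠ [] ∧ l.Pairwise (· ≥ ·) ∧ ∀ x ∈ l, 1 ≤ x

/-- A simple ploidy profile: first component at least 2, all other components 1. -/
def IsSimpleP (l : List ℕ) : Prop := l ≠ [] ∧ 2 ≤ l.headI ∧ ∀ x ∈ l.tail, x = 1

/-- A strictly simple ploidy profile. -/
def IsStrictlySimpleP (l : List ℕ) : Prop := IsSimpleP l ∧ l.length = 1

/-- Insert `x` into a descending list, directly after the last occurrence of the
value `x` (i.e. after all entries `≥ x`). -/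
def insertDesc (x : ℕ) : List ℕ → List ℕ
  | [] => [x]
  | y :: ys => if x ≤ y then y :: insertDesc x ys else x :: y :: ys

/-- One step of the simplification process for ploidy profiles; simple profiles are
fixed points.  With `α = m₁ - m₂`: if `α = 0` delete `m₁`; if `α > m₂` replace `m₁`
by `α`; if `0 < α ≤ m₂` delete `m₁` and insert `α` directly after the last
occurrence of the value `α`. -/
def simpStep (l : List ℕ) : List ℕ :=
  if 2 ≤ l.headI ∧ ∀ x ∈ l.tail, x = 1 then l
  else
    match l with
    | m1 :: m2 :: rest =>
        if m1 = m2 then m2 :: rest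
        else if m2 < m1 - m2 then (m1 - m2) :: m2 :: rest
        else insertDesc (m1 - m2) (m2 :: rest)
    | _ => l

/-- `mt` is the (simple) terminal element of the simplification sequence of `m`. -/
def IsTerminal (m mt : List ℕ) : Prop := IsSimpleP mt ∧ ∃ k, simpStep^[k] m = mt

/-- A practical ploidy profile: simple but not strictly simple, or `(2^l)`, `l ≥ 1`. -/
def Practical (l : List ℕ) : Prop :=
  (IsSimpleP l ∧ 2 ≤ l.length) ∨ (l.length = 1 ∧ ∃ j, 1 ≤ j ∧ l.headI = 2 ^ j)

/-- An arc-rich (strictly simple) ploidy profile: the binary representation of its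
single component has dimension at least two. -/
def ArcRich (l : List ℕ) : Prop :=
  l.length = 1 ∧ 2 ≤ l.headI ∧ 2 ≤ (Nat.bits l.headI).count true

/-! ### Realizations of ploidy profiles -/

/-- A network together with an indexing of its leaves by the positions of a
ploidy profile. -/
structure LNet where
  net : Net
  leaf : ℕ → ℕ

/-- `R` is a phylogenetic network realizing the ploidy profile `m`: the leaves of
`R.net` are bijectively indexed by the positions of `m` and, for every `i`, the
number of directed paths from the root to the leaf `R.leaf i` is the `i`-th
component of `m`. -/
def RealizesL (R : LNet) (m : List ℕ) : Prop :=
  IsPhylo R.net ∧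
  (∀ i < m.length, IsLeafN R.net (R.leaf i)) ∧
  (∀ i j, i < m.length → j < m.length → R.leaf i = R.leaf j → i = j) ∧
  (∀ v, IsLeafN R.net v → ∃ i < m.length, R.leaf i = v) ∧
  (∀ i < m.length, ∀ r, IsRootN R.net r → nPaths R.net r (R.leaf i) = m.getD i 0)

/-! ### Concrete constructions: bead chains and the core network `B(m)` -/

/-- Build a network from a list of arcs (as (source, target) pairs); arc
identifiers are positions in the list, so repeated pairs yield beads. -/
def mkNet (l : List (ℕ × ℕ)) : Net where
  verts := (l.map Prod.fst ++ l.map Prod.snd).toFinset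
  arcs := Finset.range l.length
  src := fun i => (l.getD i (0, 0)).1
  tgt := fun i => (l.getD i (0, 0)).2

/-- The chain `B(l)` of `l` beads with a pendant leaf: vertex `2*j` is the tree
vertex of the `(j+1)`-st bead, `2*j+1` its reticulation vertex `h_{j+1}`, there is
an arc from `h_j` to the tree vertex of the next bead, and `2*l` is the pendant
leaf `x₁` attached by the arc `(h_l, x₁)`. -/
def beadChain (l : ℕ) : Net :=
  mkNet ((List.range l).flatMap fun j => [(2*j, 2*j+1), (2*j, 2*j+1), (2*j+1, 2*j+2)])

/-- The decreasing list `(i₁, …, i_k)` of exponents of the binary representation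
of `m₁`. -/
def expList (m1 : ℕ) : List ℕ :=
  ((List.range (m1+1)).filter fun j => m1.testBit j).reverse

/-- First vertex code available for the leaves `x_2, …, x_n` in `BNet`. -/
def xBase (m1 : ℕ) : ℕ := 2 * (expList m1).headI + 2 * (expList m1).length + 10

/-- The arcs of the core network `B(m)` for the simple profile `(m₁, 1, …, 1)` on
`n` taxa: a chain of `i₁` beads with pendant leaf `x₁ = 0` (root is the vertex
`2`), one root arc subdivided by `s_k` and, for `2 ≤ j ≤ k`, an arc `(s_j, s_j')`
where `s_j'` subdivides the outgoing arc of the reticulation vertex having exactly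
`i_j` reticulation vertices strictly below it and `s_2, …, s_{k-1}` subdivide the
arc `(s_k, s_k')`; if `n ≥ 2` a caterpillar tree on the leaves `x_2, …, x_n`
(codes `xBase m₁ + i`) is attached via a subdivision vertex `w` (placed on a root
arc if `k = 1`, on `(s_k, s_k')` if `k = 2`, and on `(s_{k-1}, s_k')` if `k ≥ 3`). -/
def BArcs (m1 n : ℕ) : List (ℕ × ℕ) :=
  let E := expList m1
  let k := E.length
  let i1 := E.headI
  let hv : ℕ → ℕ := fun j => 2*j + 1
  let tv : ℕ → ℕ := fun j => 2*j
  let nxt : ℕ → ℕ := fun j => if j = i1 then 0 else 2*j + 2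
  let S' : ℕ → ℕ := fun j => 2*i1 + 2 + j
  let P : ℕ → ℕ := fun j => 2*i1 + k + 2 + j
  let w : ℕ := 2*i1 + 2*k + 4
  let L : ℕ := 2*i1 + 2*k + 10
  let x : ℕ → ℕ := fun i => L + i
  let cv : ℕ → ℕ := fun i => L + n + i
  let r : ℕ → ℕ := fun t => i1 - E.getD (t-1) 0
  let rootArcs : List (ℕ × ℕ) :=
    if 2 ≤ k then [(tv 1, hv 1), (tv 1, P k), (P k, hv 1)]
    else if 2 ≤ n then [(tv 1, hv 1), (tv 1, w), (w, hv 1)]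
    else [(tv 1, hv 1), (tv 1, hv 1)]
  let otherBeads : List (ℕ × ℕ) :=
    (List.range' 2 (i1 - 1)).flatMap fun j => [(tv j, hv j), (tv j, hv j)]
  let chainArcs : List (ℕ × ℕ) :=
    (List.range' 1 i1).flatMap fun j =>
      match (List.range' 2 (k-1)).find? (fun t => r t == j) with
      | some t => [(hv j, S' t), (S' t, nxt j)]
      | none => [(hv j, nxt j)]
  let sChain : List ℕ :=
    [P k] ++ (List.range' 2 (k-2)).map P ++ (if 2 ≤ n then [w] else []) ++ [S' k]
  let sArcs : List (ℕ × ℕ) :=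
    if 2 ≤ k then (sChain.zip sChain.tail) ++ (List.range' 2 (k-2)).map (fun j => (P j, S' j))
    else []
  let catArcs : List (ℕ × ℕ) :=
    if n ≤ 1 then []
    else if n = 2 then [(w, x 2)]
    else [(w, cv 2)] ++
      ((List.range' 2 (n-3)).flatMap fun i => [(cv i, x i), (cv i, cv (i+1))]) ++
      [(cv (n-1), x (n-1)), (cv (n-1), x n)]
  rootArcs ++ otherBeads ++ chainArcs ++ sArcs ++ catArcs

/-- The core network `B(m)` for a simple profile with first component `m1` on `n`
taxa. -/
def BNet (m1 n : ℕ) : Net := mkNet (BArcs m1 n)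

/-- The core network `B(m)` of a ploidy profile whose terminal element is `mt`,
together with its leaf indexing (leaf `0` is `x₁ = 0`, leaf `i` is `x_{i+1}`). -/
def BLNet (mt : List ℕ) : LNet where
  net := BNet mt.headI mt.length
  leaf := fun i => if i = 0 then 0 else xBase mt.headI + (i + 1)

/-- The naive realization of the simple profile `(m₁, 1, …, 1)` on `n` taxa: a
directed path `0, 1, …, n + 2m₁ - 3` (with `v_j = j - 1`, `w_i = m₁ + i - 3`,
`v_j' = n + 2m₁ - 3 - j` and `x₁ = n + 2m₁ - 3`) together with the arcs
`(v_j, v_j')` and the pendant leaf arcs `(w_i, x_i)` with `x_i = n + 2m₁ + i`. -/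
def naiveNet (m1 n : ℕ) : Net :=
  mkNet (((List.range (n + 2*m1 - 3)).map fun p => (p, p+1)) ++
    ((List.range' 1 (m1 - 1)).map fun j => (j - 1, n + 2*m1 - 3 - j)) ++
    ((List.range' 2 (n - 1)).map fun i => (m1 + i - 3, n + 2*m1 + i)))

/-! ### Cherry modification operations -/

/-- `reduce(a,b)`: delete the leaf `b` of the cherry `{a,b}` together with its
incoming arc and suppress the resulting degree-two vertex (collapsing the network
to the single vertex `a` when the common parent is the root). -/
def ReduceOp (G G' : Net) : Prop :=
  ∃ a b p ea eb, a ≠ b ∧ IsLeafN G a ∧ IsLeafN G b ∧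
    ArcFT G ea p a ∧ ArcFT G eb p b ∧ ea ≠ eb ∧
    G'.verts = (G.verts.erase b).erase p ∧
    G'.arcs = (G.arcs.erase eb).erase ea ∧
    ((IsRootN G p ∧ ∀ e ∈ G'.arcs, G'.src e = G.src e ∧ G'.tgt e = G.tgt e) ∨
     (∃ ep q, ArcFT G ep q p ∧
        (∀ e ∈ G'.arcs, e ≠ ep → G'.src e = G.src e ∧ G'.tgt e = G.tgt e) ∧
        G'.src ep = q ∧ G'.tgt ep = a))

/-- `cut(a,b)`: delete the reticulation arc of the reticulate cherry `{a,b}` with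
reticulation leaf `b`, suppressing the two resulting degree-two vertices. -/
def CutOp (G G' : Net) : Prop :=
  ∃ a b pa pb e1 e2 e3 e4 e5 q r,
    a ≠ b ∧ IsLeafN G a ∧ IsLeafN G b ∧ IsReticN G pb ∧
    ArcFT G e1 pa a ∧ ArcFT G e2 pb b ∧ ArcFT G e3 pa pb ∧
    ArcFT G e4 q pb ∧ e3 ≠ e4 ∧ ArcFT G e5 r pa ∧
    G'.verts = (G.verts.erase pa).erase pb ∧
    G'.arcs = ((G.arcs.erase e3).erase e1).erase e2 ∧
    (∀ e ∈ G'.arcs, e ≠ e4 → e ≠ e5 → G'.src e = G.src e ∧ G'.tgt e = G.tgt e) ∧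
    G'.src e5 = r ∧ G'.tgt e5 = a ∧
    G'.src e4 = q ∧ G'.tgt e4 = b

/-- `simp(a)`: for a type-1 degenerate cherry `{a}` (sole leaf whose parent is the
reticulation vertex of a bead), delete one arc of the bead, suppressing the
resulting degree-two vertex and collapsing the outgoing arc of the tree vertex of
the bead. -/
def SimpOp (G G' : Net) : Prop :=
  ∃ a h u e1 e2 e3,
    IsLeafN G a ∧ (∀ w, IsLeafN G w → w = a) ∧ IsReticN G h ∧
    ArcFT G e1 u h ∧ ArcFT G e2 u h ∧ e1 ≠ e2 ∧ ArcFT G e3 h a ∧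
    ((IsRootN G u ∧ G'.verts = {a} ∧ G'.arcs = ∅) ∨
     (∃ eu q, ArcFT G eu q u ∧
        G'.verts = (G.verts.erase h).erase u ∧
        G'.arcs = ((G.arcs.erase e2).erase e3).erase e1 ∧
        (∀ e ∈ G'.arcs, e ≠ eu → G'.src e = G.src e ∧ G'.tgt e = G.tgt e) ∧
        G'.src eu = q ∧ G'.tgt eu = a))

/-- `trim(a)`: for a type-2 degenerate cherry `{a}` (sole leaf whose parent `p` is
a reticulation vertex with distinct parents `q₁, q₂`), delete the arc `(q₁,p)`
(case (a): there is a vertex `q` with arcs `(q,q₁)`, `(q,q₂)`, `(q₁,q₂)`),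
respectively one of the two parallel arcs from `q` to `q₂` (case (b): there is an
arc `(q₁,q)` and a pair of parallel arcs from `q` to `q₂`), suppressing the two
resulting degree-two vertices. -/
def TrimOp (G G' : Net) : Prop :=
  ∃ a p g0, IsLeafN G a ∧ (∀ w, IsLeafN G w → w = a) ∧ IsReticN G p ∧ ArcFT G g0 p a ∧
   ((∃ q q1 q2 f1 f2 f3 g1 g2,
      ArcFT G g1 q1 p ∧ ArcFT G g2 q2 p ∧ g1 ≠ g2 ∧ q1 ≠ q2 ∧
      ArcFT G f1 q q1 ∧ ArcFT G f2 q q2 ∧ ArcFT G f3 q1 q2 ∧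
      G'.verts = (G.verts.erase q1).erase p ∧
      G'.arcs = ((G.arcs.erase g1).erase f3).erase g0 ∧
      (∀ e ∈ G'.arcs, e ≠ f1 → e ≠ g2 → G'.src e = G.src e ∧ G'.tgt e = G.tgt e) ∧
      G'.src f1 = q ∧ G'.tgt f1 = q2 ∧
      G'.src g2 = q2 ∧ G'.tgt g2 = a) ∨
    (∃ q q1 q2 eq' f1 f2 g1 g2,
      ArcFT G g1 q1 p ∧ ArcFT G g2 q2 p ∧ g1 ≠ g2 ∧ q1 ≠ q2 ∧
      ArcFT G eq' q1 q ∧ ArcFT G f1 q q2 ∧ ArcFT G f2 q q2 ∧ f1 ≠ f2 ∧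
      G'.verts = (G.verts.erase q).erase q2 ∧
      G'.arcs = ((G.arcs.erase f2).erase f1).erase g2 ∧
      (∀ e ∈ G'.arcs, e ≠ eq' → G'.src e = G.src e ∧ G'.tgt e = G.tgt e) ∧
      G'.src eq' = q1 ∧ G'.tgt eq' = p))

/-- A single cherry modification operation: reduce, cut or simp. -/
def CherryModOp (G G' : Net) : Prop := ReduceOp G G' ∨ CutOp G G' ∨ SimpOp G G'

/-- A single weak cherry modification operation: reduce, cut, simp or trim. -/
def WeakCherryModOp (G G' : Net) : Prop := CherryModOp G G' ∨ TrimOp G G'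

/-- The network consisting of a single vertex (and no arcs). -/
def IsSingleV (G : Net) : Prop := ∃ v, G.verts = {v} ∧ G.arcs = ∅

/-- `G` admits a complete cherry modification sequence, i.e. `G` is an orchard. -/
def IsOrchardN (G : Net) : Prop :=
  ∃ G', Relation.ReflTransGen CherryModOp G G' ∧ IsSingleV G'

/-- `G` admits a complete weak cherry modification sequence, i.e. `G` is a weak
orchard. -/
def IsWeakOrchardN (G : Net) : Prop :=
  ∃ G', Relation.ReflTransGen WeakCherryModOp G G' ∧ IsSingleV G'

/-! ### The traceback through the simplification sequence -/

/-- Traceback step in case `α = 0`: replace the leaf indexing the first component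
of `m''` by a cherry on two new leaves. -/
def CherryExpandOp (R'' R' : LNet) : Prop :=
  ∃ y1 y2 b1 b2,
    y1 ∉ R''.net.verts ∧ y2 ∉ R''.net.verts ∧ y1 ≠ y2 ∧
    b1 ∉ R''.net.arcs ∧ b2 ∉ R''.net.arcs ∧ b1 ≠ b2 ∧
    R'.net.verts = R''.net.verts ∪ {y1, y2} ∧
    R'.net.arcs = R''.net.arcs ∪ {b1, b2} ∧
    (∀ a ∈ R''.net.arcs, R'.net.src a = R''.net.src a ∧ R'.net.tgt a = R''.net.tgt a) ∧
    R'.net.src b1 = R''.leaf 0 ∧ R'.net.tgt b1 = y1 ∧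
    R'.net.src b2 = R''.leaf 0 ∧ R'.net.tgt b2 = y2 ∧
    R'.leaf 0 = y1 ∧ R'.leaf 1 = y2 ∧ (∀ i, 1 ≤ i → R'.leaf (i + 1) = R''.leaf i)

/-- Traceback step in case `α > m₂'`: subdivide the incoming arcs of the leaves
indexing the first and second components of `m''` by new vertices `u` and `v` and
add the arc `(v,u)`. -/
def AddArcOp (R'' R' : LNet) : Prop :=
  ∃ u v a0 a1 b0 b1 c,
    u ∉ R''.net.verts ∧ v ∉ R''.net.verts ∧ u ≠ v ∧
    a0 ∈ R''.net.arcs ∧ R''.net.tgt a0 = R''.leaf 0 ∧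
    a1 ∈ R''.net.arcs ∧ R''.net.tgt a1 = R''.leaf 1 ∧ a0 ≠ a1 ∧
    b0 ∉ R''.net.arcs ∧ b1 ∉ R''.net.arcs ∧ c ∉ R''.net.arcs ∧
    b0 ≠ b1 ∧ b0 ≠ c ∧ b1 ≠ c ∧
    R'.net.verts = R''.net.verts ∪ {u, v} ∧
    R'.net.arcs = R''.net.arcs ∪ {b0, b1, c} ∧
    (∀ a ∈ R''.net.arcs, a ≠ a0 → a ≠ a1 →
        R'.net.src a = R''.net.src a ∧ R'.net.tgt a = R''.net.tgt a) ∧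
    R'.net.src a0 = R''.net.src a0 ∧ R'.net.tgt a0 = u ∧
    R'.net.src a1 = R''.net.src a1 ∧ R'.net.tgt a1 = v ∧
    R'.net.src b0 = u ∧ R'.net.tgt b0 = R''.leaf 0 ∧
    R'.net.src b1 = v ∧ R'.net.tgt b1 = R''.leaf 1 ∧
    R'.net.src c = v ∧ R'.net.tgt c = u ∧
    (∀ i, R'.leaf i = R''.leaf i)

/-- Traceback step in case `0 < α ≤ m₂'`, where the inserted component `α` sits at
(0-based) position `j` of `m''`: subdivide the incoming arc of the leaf indexing
`α` by a vertex `v`, replace the leaf indexing the first component of `m''` by a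
cherry, subdivide the incoming arc of one of the two new cherry leaves by a vertex
`u`, add the arc `(v,u)` and delete the leaf indexing `α` together with its
incoming arc, suppressing the resulting degree-two vertex. -/
def InsertBackOp (j : ℕ) (R'' R' : LNet) : Prop :=
  ∃ u y1 y2 c1 c2 c3 az,
    u ∉ R''.net.verts ∧ y1 ∉ R''.net.verts ∧ y2 ∉ R''.net.verts ∧
    u ≠ y1 ∧ u ≠ y2 ∧ y1 ≠ y2 ∧
    c1 ∉ R''.net.arcs ∧ c2 ∉ R''.net.arcs ∧ c3 ∉ R''.net.arcs ∧
    c1 ≠ c2 ∧ c1 ≠ c3 ∧ c2 ≠ c3 ∧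
    az ∈ R''.net.arcs ∧ R''.net.tgt az = R''.leaf j ∧
    R'.net.verts = (R''.net.verts.erase (R''.leaf j)) ∪ {u, y1, y2} ∧
    R'.net.arcs = R''.net.arcs ∪ {c1, c2, c3} ∧
    (∀ a ∈ R''.net.arcs, a ≠ az →
        R'.net.src a = R''.net.src a ∧ R'.net.tgt a = R''.net.tgt a) ∧
    R'.net.src az = R''.net.src az ∧ R'.net.tgt az = u ∧
    R'.net.src c1 = R''.leaf 0 ∧ R'.net.tgt c1 = u ∧
    R'.net.src c2 = u ∧ R'.net.tgt c2 = y1 ∧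
    R'.net.src c3 = R''.leaf 0 ∧ R'.net.tgt c3 = y2 ∧
    R'.leaf 0 = y1 ∧ R'.leaf 1 = y2 ∧
    (∀ i, 1 ≤ i → i < j → R'.leaf (i + 1) = R''.leaf i) ∧
    (∀ i, j < i → R'.leaf i = R''.leaf i)

/-- One step of the traceback: `R'` is a realization of the non-simple profile `m'`
obtained from the realization `R''` of `simpStep m'` by the surgery dictated by the
case (`α = 0`, `α > m₂'` or `0 < α ≤ m₂'`) that produced `simpStep m'` from `m'`. -/
def TraceStep (m' : List ℕ) (R'' R' : LNet) : Prop :=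
  2 ≤ m'.length ∧ ¬ IsSimpleP m' ∧
  ((m'.headI = m'.tail.headI ∧ CherryExpandOp R'' R') ∨
   (m'.tail.headI < m'.headI - m'.tail.headI ∧ AddArcOp R'' R') ∨
   (0 < m'.headI - m'.tail.headI ∧ m'.headI - m'.tail.headI ≤ m'.tail.headI ∧
     InsertBackOp
       ((m'.tail.takeWhile fun y => decide (m'.headI - m'.tail.headI ≤ y)).length)
       R'' R'))

/-- `TracebackFrom core m N`: `N` is a network `N(m)` obtainable by the traceback
through the simplification sequence of `m`, initialized with the core network
`core`. -/
inductive TracebackFrom (core : LNet) : List ℕ → LNet → Prop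
  | base (m : List ℕ) : IsSimpleP m → TracebackFrom core m core
  | step (m' : List ℕ) (R'' R' : LNet) :
      TracebackFrom core (simpStep m') R'' → TraceStep m' R'' R' →
      TracebackFrom core m' R'

/-! ### Tree-based and tree-child networks -/

def subIn (G : Net) (A : Finset ℕ) (v : ℕ) : ℕ := (A.filter fun a => G.tgt a = v).card
def subOut (G : Net) (A : Finset ℕ) (v : ℕ) : ℕ := (A.filter fun a => G.src a = v).card

/-- `G` is tree-based: some subset `A` of its arcs forms a spanning subdivision of a
rooted phylogenetic tree (with one extra incoming arc added to its root) whose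
leaves are exactly the leaves of `G`; all remaining arcs of `G` join subdivision
vertices, and every subdivision vertex has total degree 3 in `G`. -/
def IsTreeBased (G : Net) : Prop :=
  ∃ A : Finset ℕ, A ⊆ G.arcs ∧
    (∃! r, r ∈ G.verts ∧ subIn G A r = 0) ∧
    (∀ r ∈ G.verts, subIn G A r = 0 → subOut G A r = 1) ∧
    (∀ v ∈ G.verts,
        (subIn G A v = 0 ∧ subOut G A v = 1) ∨ (subIn G A v = 1 ∧ subOut G A v = 0) ∨
        (subIn G A v = 1 ∧ subOut G A v = 1) ∨ (subIn G A v = 1 ∧ subOut G A v = 2)) ∧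
    (∀ v ∈ G.verts, subIn G A v = 1 → subOut G A v = 0 → IsLeafN G v) ∧
    (∀ v, IsLeafN G v → subIn G A v = 1 ∧ subOut G A v = 0) ∧
    (∀ a ∈ G.arcs, a ∉ A →
        subIn G A (G.src a) = 1 ∧ subOut G A (G.src a) = 1 ∧
        subIn G A (G.tgt a) = 1 ∧ subOut G A (G.tgt a) = 1) ∧
    (∀ v ∈ G.verts, subIn G A v = 1 → subOut G A v = 1 → inDeg G v + outDeg G v = 3)

/-- `G` is tree-child (reticulation vertices contained in beads being ignored):
every vertex has a directed path to a leaf on which every vertex except possibly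
the first one is either not a reticulation vertex or is contained in a bead. -/
def IsTreeChild (G : Net) : Prop :=
  ∀ v ∈ G.verts, ∃ (l : List ℕ) (w : ℕ), IsWalk G l v w ∧ IsLeafN G w ∧
    ∀ a ∈ l, IsReticN G (G.tgt a) → InBead G (G.tgt a)

/-! ### Multiple-labelled networks and the split operation -/

/-- A multiple-labelled network: a network together with a labelling map assigning
to each leaf vertex the (0-based) position of the profile component it is labelled
with; distinct leaves may carry the same label. -/
structure MLNet where
  net : Net
  lab : ℕ → ℕ

/-- A multiple-labelled tree: a multiple-labelled network without reticulation
vertices. -/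
def IsMLTree (R : MLNet) : Prop := ∀ v, ¬ IsReticN R.net v

/-- The multiple-labelled network `R` realizes the ploidy profile `m`: for every
position `i` of `m`, the total number of directed paths from the root to leaves
labelled `i` equals the `i`-th component of `m`. -/
def MLRealizes (R : MLNet) (m : List ℕ) : Prop :=
  IsPhylo R.net ∧
  (∀ v, IsLeafN R.net v → R.lab v < m.length) ∧
  (∀ i < m.length, ∀ r, IsRootN R.net r →
      (∑ v ∈ R.net.verts.filter (fun v => IsLeafN R.net v ∧ R.lab v = i),
          nPaths R.net r v) = m.getD i 0)

/-- The arcs of the subgraph induced by the vertices below `c`. -/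
def arcsBelow (G : Net) (c : ℕ) : Set ℕ :=
  {b | b ∈ G.arcs ∧ BelowV G c (G.src b) ∧ BelowV G c (G.tgt b)}

/-- `a` is a cut-arc of `G`: removing it disconnects its end vertices in the
underlying undirected graph. -/
def IsCutArc (G : Net) (a : ℕ) : Prop :=
  a ∈ G.arcs ∧
    ¬ Relation.ReflTransGen
        (fun x y => ∃ b ∈ G.arcs, b ≠ a ∧
          ((G.src b = x ∧ G.tgt b = y) ∨ (G.src b = y ∧ G.tgt b = x)))
        (G.src a) (G.tgt a)

/-- The split operation: `R'` is obtained from `R` by deleting a reticulation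
vertex `h` (with parents `p₁, p₂` and child `c`, where `(h,c)` is a cut-arc)
together with its three incident arcs, making a disjoint copy (via `φ` on vertices
and `ψ` on arcs) of the subgraph induced by the vertices below `c`, and attaching
one copy of `c` to `p₁` by an arc `(p₁,c)` and the other to `p₂` by an arc
`(p₂,c)`. -/
def SplitRel (R R' : MLNet) : Prop :=
  ∃ (h p1 p2 c a0 a1 a2 : ℕ) (φ ψ : ℕ → ℕ),
    IsReticN R.net h ∧
    ArcFT R.net a0 h c ∧ IsCutArc R.net a0 ∧
    ArcFT R.net a1 p1 h ∧ ArcFT R.net a2 p2 h ∧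
    a1 ≠ a2 ∧ a0 ≠ a1 ∧ a0 ≠ a2 ∧
    Set.InjOn φ {w | BelowV R.net c w} ∧
    (∀ w, BelowV R.net c w → φ w ∉ R.net.verts) ∧
    Set.InjOn ψ (arcsBelow R.net c) ∧
    (∀ b ∈ arcsBelow R.net c, ψ b ∉ R.net.arcs) ∧
    (↑R'.net.verts : Set ℕ) =
      ((↑R.net.verts : Set ℕ) \ {h}) ∪ (φ '' {w | BelowV R.net c w}) ∧
    (↑R'.net.arcs : Set ℕ) =
      ((↑R.net.arcs : Set ℕ) \ {a0}) ∪ (ψ '' arcsBelow R.net c) ∧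
    (∀ b ∈ R.net.arcs, b ≠ a0 → b ≠ a1 → b ≠ a2 →
        R'.net.src b = R.net.src b ∧ R'.net.tgt b = R.net.tgt b) ∧
    R'.net.src a1 = p1 ∧ R'.net.tgt a1 = c ∧
    R'.net.src a2 = p2 ∧ R'.net.tgt a2 = φ c ∧
    (∀ b ∈ arcsBelow R.net c,
        R'.net.src (ψ b) = φ (R.net.src b) ∧ R'.net.tgt (ψ b) = φ (R.net.tgt b)) ∧
    (∀ v ∈ R.net.verts, v ≠ h → R'.lab v = R.lab v) ∧
    (∀ w, BelowV R.net c w → R'.lab (φ w) = R.lab w)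

/-- Adjacency in ploidy profile space `𝒫(m)` (relative to an edit distance `D` on
multiple-labelled trees): both endpoints realize `m` and either one is obtained
from the other by a single split operation, or both are multiple-labelled trees at
`D`-distance 1. -/
def PEdge (m : List ℕ) (D : MLNet → MLNet → ℕ) (A B : MLNet) : Prop :=
  MLRealizes A m ∧ MLRealizes B m ∧
    (SplitRel A B ∨ SplitRel B A ∨ (IsMLTree A ∧ IsMLTree B ∧ D A B = 1))

/-! ### Auxiliary lemmas for Statement 13 -/

section SplitAux

open Relation

lemma isWalk_nil_iff {G : Net} {u v : ℕ} : IsWalk G [] u v ↔ u = v ∧ u ∈ G.verts := Iff.rfl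

lemma isWalk_cons_iff {G : Net} {a : ℕ} {l : List ℕ} {u v : ℕ} :
    IsWalk G (a :: l) u v ↔ a ∈ G.arcs ∧ G.src a = u ∧ IsWalk G l (G.tgt a) v := Iff.rfl

lemma walk_start_mem' {G : Net} (hG : ∀ a ∈ G.arcs, G.src a ∈ G.verts) {l : List ℕ}
    {u v : ℕ} (hw : IsWalk G l u v) : u ∈ G.verts := by
  cases l with
  | nil => exact hw.1 ▸ hw.2
  | cons a t => exact hw.2.1 ▸ hG a hw.1

lemma walk_start_mem {G : Net} (hG : IsPhylo G) {l : List ℕ} {u v : ℕ}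
    (hw : IsWalk G l u v) : u ∈ G.verts := walk_start_mem' hG.src_mem hw

lemma walk_end_mem {G : Net} (hG : IsPhylo G) {l : List ℕ} {u v : ℕ}
    (hw : IsWalk G l u v) : v ∈ G.verts := by
  induction l generalizing u with
  | nil => exact hw.1 ▸ hw.2
  | cons a t ih => exact ih hw.2.2

lemma walk_arcs_mem {G : Net} {l : List ℕ} {u v : ℕ}
    (hw : IsWalk G l u v) : ∀ a ∈ l, a ∈ G.arcs := by
  induction l generalizing u with
  | nil => intro a ha; cases ha
  | cons b t ih =>
    intro a ha
    rcases List.mem_cons.mp ha with rfl | ha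
    · exact hw.1
    · exact ih hw.2.2 a ha

lemma isWalk_append_of {G : Net} {l1 l2 : List ℕ} {u w v : ℕ}
    (h1 : IsWalk G l1 u w) (h2 : IsWalk G l2 w v) : IsWalk G (l1 ++ l2) u v := by
  induction l1 generalizing u with
  | nil => rcases h1 with ⟨rfl, _⟩; exact h2
  | cons a t ih => exact ⟨h1.1, h1.2.1, ih h1.2.2⟩

lemma isWalk_append_split' {G : Net} (hG : ∀ a ∈ G.arcs, G.src a ∈ G.verts)
    {l1 l2 : List ℕ} {u v : ℕ} (hw : IsWalk G (l1 ++ l2) u v) :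
    ∃ w, IsWalk G l1 u w ∧ IsWalk G l2 w v := by
  induction l1 generalizing u with
  | nil => exact ⟨u, ⟨rfl, walk_start_mem' hG hw⟩, hw⟩
  | cons a t ih =>
    obtain ⟨w, h1, h2⟩ := ih hw.2.2
    exact ⟨w, ⟨hw.1, hw.2.1, h1⟩, h2⟩

lemma isWalk_append_split {G : Net} (hG : IsPhylo G) {l1 l2 : List ℕ} {u v : ℕ}
    (hw : IsWalk G (l1 ++ l2) u v) : ∃ w, IsWalk G l1 u w ∧ IsWalk G l2 w v :=
  isWalk_append_split' hG.src_mem hw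

lemma below_trans {G : Net} {u v w : ℕ} (h1 : BelowV G u v) (h2 : BelowV G v w) :
    BelowV G u w := by
  obtain ⟨l1, h1⟩ := h1; obtain ⟨l2, h2⟩ := h2
  exact ⟨l1 ++ l2, isWalk_append_of h1 h2⟩

lemma below_refl {G : Net} {u : ℕ} (hu : u ∈ G.verts) : BelowV G u u := ⟨[], rfl, hu⟩

lemma below_arc {G : Net} {u b : ℕ} (hb : b ∈ G.arcs) (h : BelowV G u (G.src b))
    (hv : G.tgt b ∈ G.verts) : BelowV G u (G.tgt b) :=
  below_trans h ⟨[b], hb, rfl, rfl, hv⟩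

lemma walk_nodup {G : Net} (hG : IsPhylo G) {l : List ℕ} {u v : ℕ}
    (hw : IsWalk G l u v) : l.Nodup := by
  induction l generalizing u with
  | nil => exact List.nodup_nil
  | cons a t ih =>
    refine List.nodup_cons.mpr ⟨?_, ih hw.2.2⟩
    intro hmem
    obtain ⟨l1, l2, rfl⟩ := List.append_of_mem hmem
    obtain ⟨w, hw1, hw2⟩ := isWalk_append_split hG hw.2.2
    have hsrc : G.src a = w := hw2.2.1
    have hwu : w = u := by rw [← hsrc, hw.2.1]
    exact hG.acyclic u (a :: l1) (by simp) ⟨hw.1, hw.2.1, hwu ▸ hw1⟩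

lemma finite_lists_of_le {s : Finset ℕ} : ∀ n : ℕ,
    {l : List ℕ | l.length ≤ n ∧ ∀ a ∈ l, a ∈ s}.Finite := by
  intro n
  induction n with
  | zero =>
    apply Set.Finite.subset (Set.finite_singleton ([] : List ℕ))
    rintro l ⟨hl, _⟩
    simp [List.length_eq_zero_iff.mp (Nat.le_zero.mp hl)]
  | succ n ih =>
    apply Set.Finite.subset
      (Set.Finite.union (Set.finite_singleton ([] : List ℕ))
        (Set.Finite.biUnion s.finite_toSet
          (fun a _ => ih.image (fun l => a :: l))))
    rintro l ⟨hl, hmem⟩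
    cases l with
    | nil => exact Or.inl rfl
    | cons a t =>
      refine Or.inr (Set.mem_biUnion (hmem a (by simp)) ?_)
      exact ⟨t, ⟨Nat.le_of_succ_le_succ hl, fun b hb => hmem b (by simp [hb])⟩, rfl⟩

lemma finite_walks {G : Net} (hG : IsPhylo G) (u v : ℕ) :
    {l : List ℕ | IsWalk G l u v}.Finite := by
  apply Set.Finite.subset (finite_lists_of_le (s := G.arcs) G.arcs.card)
  intro l hl
  have hnd : l.Nodup := walk_nodup hG hl
  have hsub : l.toFinset ⊆ G.arcs := fun a ha =>
    walk_arcs_mem hl a (List.mem_toFinset.mp ha)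
  have : l.length ≤ G.arcs.card := by
    rw [← List.toFinset_card_of_nodup hnd]
    exact Finset.card_le_card hsub
  exact ⟨this, fun a ha => walk_arcs_mem hl a ha⟩

lemma anc_finite {G : Net} (hG : IsPhylo G) (v : ℕ) : {u | BelowV G u v}.Finite := by
  apply Set.Finite.subset G.verts.finite_toSet
  intro u hu
  exact walk_start_mem hG hu.choose_spec

/-- All the data of a single split operation (vertices/arcs part). -/
structure SData (G G' : Net) where
  h : ℕ
  p1 : ℕ
  p2 : ℕ
  c : ℕ
  a0 : ℕ
  a1 : ℕ
  a2 : ℕ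
  phi : ℕ → ℕ
  psi : ℕ → ℕ
  phylo : IsPhylo G
  retic : IsReticN G h
  arc0 : ArcFT G a0 h c
  cut : IsCutArc G a0
  arc1 : ArcFT G a1 p1 h
  arc2 : ArcFT G a2 p2 h
  ne12 : a1 ≠ a2
  ne01 : a0 ≠ a1
  ne02 : a0 ≠ a2
  injphi : Set.InjOn phi {w | BelowV G c w}
  freshphi : ∀ w, BelowV G c w → phi w ∉ G.verts
  injpsi : Set.InjOn psi (arcsBelow G c)
  freshpsi : ∀ b ∈ arcsBelow G c, psi b ∉ G.arcs
  verts' : (↑G'.verts : Set ℕ) = ((↑G.verts : Set ℕ) \ {h}) ∪ (phi '' {w | BelowV G c w})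
  arcs' : (↑G'.arcs : Set ℕ) = ((↑G.arcs : Set ℕ) \ {a0}) ∪ (psi '' arcsBelow G c)
  keep : ∀ b ∈ G.arcs, b ≠ a0 → b ≠ a1 → b ≠ a2 → G'.src b = G.src b ∧ G'.tgt b = G.tgt b
  s1 : G'.src a1 = p1
  t1 : G'.tgt a1 = c
  s2 : G'.src a2 = p2
  t2 : G'.tgt a2 = phi c
  mapped : ∀ b ∈ arcsBelow G c,
      G'.src (psi b) = phi (G.src b) ∧ G'.tgt (psi b) = phi (G.tgt b)

namespace SData

variable {G G' : Net} (D : SData G G')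

/-- The set of vertices below `c`. -/
def B : Set ℕ := {w | BelowV G D.c w}

/-- The undirected adjacency relation avoiding `a0`. -/
def UR (x y : ℕ) : Prop :=
  ∃ b ∈ G.arcs, b ≠ D.a0 ∧
    ((G.src b = x ∧ G.tgt b = y) ∨ (G.src b = y ∧ G.tgt b = x))

lemma ur_symm : Symmetric D.UR := by
  rintro x y ⟨b, hb, hne, hor⟩
  exact ⟨b, hb, hne, hor.symm⟩

lemma c_mem : D.c ∈ G.verts := D.arc0.2.2 ▸ D.phylo.tgt_mem D.a0 D.arc0.1

lemma c_in_B : D.c ∈ D.B := below_refl D.c_mem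

lemma B_sub : ∀ w ∈ D.B, w ∈ G.verts := fun _ hw => walk_end_mem D.phylo hw.choose_spec

lemma walk_a0 : IsWalk G [D.a0] D.h D.c :=
  ⟨D.arc0.1, D.arc0.2.1, D.arc0.2.2, by rw [D.arc0.2.2]; exact D.c_mem⟩

lemma h_not_B : D.h ∉ D.B := by
  rintro ⟨l, hl⟩
  exact D.phylo.acyclic D.c (l ++ [D.a0]) (by simp) (isWalk_append_of hl D.walk_a0)

lemma sep_fwd {b : ℕ} (hb : b ∈ G.arcs) (hs : G.src b ∈ D.B) : G.tgt b ∈ D.B :=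
  below_arc hb hs (D.phylo.tgt_mem b hb)

lemma p1_not_B : D.p1 ∉ D.B := by
  rintro ⟨l, hl⟩
  refine D.phylo.acyclic D.c (l ++ [D.a1, D.a0]) (by simp) (isWalk_append_of hl ?_)
  exact ⟨D.arc1.1, D.arc1.2.1, by rw [D.arc1.2.2]; exact D.walk_a0⟩

lemma p2_not_B : D.p2 ∉ D.B := by
  rintro ⟨l, hl⟩
  refine D.phylo.acyclic D.c (l ++ [D.a2, D.a0]) (by simp) (isWalk_append_of hl ?_)
  exact ⟨D.arc2.1, D.arc2.2.1, by rw [D.arc2.2.2]; exact D.walk_a0⟩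

lemma filter_eq_pair {s : Finset ℕ} {p : ℕ → Prop} [DecidablePred p] {x y : ℕ}
    (hcard : (s.filter p).card = 2) (hx : x ∈ s) (hpx : p x) (hy : y ∈ s) (hpy : p y)
    (hxy : x ≠ y) : ∀ b ∈ s, p b → b = x ∨ b = y := by
  have hsub : ({x, y} : Finset ℕ) ⊆ s.filter p := by
    intro b hb
    rcases Finset.mem_insert.mp hb with rfl | hb
    · exact Finset.mem_filter.mpr ⟨hx, hpx⟩
    · rw [Finset.mem_singleton.mp hb]
      exact Finset.mem_filter.mpr ⟨hy, hpy⟩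
  have hc2 : ({x, y} : Finset ℕ).card = 2 := by
    rw [Finset.card_insert_of_notMem (by simp [hxy]), Finset.card_singleton]
  have heq : s.filter p = {x, y} :=
    (Finset.eq_of_subset_of_card_le hsub (by rw [hcard, hc2])).symm
  intro b hb hpb
  have : b ∈ s.filter p := Finset.mem_filter.mpr ⟨hb, hpb⟩
  rw [heq] at this
  simpa using this

lemma filter_eq_single {s : Finset ℕ} {p : ℕ → Prop} [DecidablePred p] {x : ℕ}
    (hcard : (s.filter p).card = 1) (hx : x ∈ s) (hpx : p x) :
    ∀ b ∈ s, p b → b = x := by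
  obtain ⟨z, hz⟩ := Finset.card_eq_one.mp hcard
  intro b hb hpb
  have hbz : b ∈ s.filter p := Finset.mem_filter.mpr ⟨hb, hpb⟩
  have hxz : x ∈ s.filter p := Finset.mem_filter.mpr ⟨hx, hpx⟩
  rw [hz, Finset.mem_singleton] at hbz hxz
  rw [hbz, hxz]

lemma arc_to_h {b : ℕ} (hb : b ∈ G.arcs) (ht : G.tgt b = D.h) : b = D.a1 ∨ b = D.a2 :=
  filter_eq_pair D.retic.2.1 D.arc1.1 D.arc1.2.2 D.arc2.1 D.arc2.2.2 D.ne12 b hb ht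

lemma arc_from_h {b : ℕ} (hb : b ∈ G.arcs) (hs : G.src b = D.h) : b = D.a0 :=
  filter_eq_single D.retic.2.2 D.arc0.1 D.arc0.2.1 b hb hs

lemma conn_c_of_B : ∀ {l : List ℕ} {u w : ℕ}, IsWalk G l u w → u ∈ D.B →
    Relation.ReflTransGen D.UR u w := by
  intro l
  induction l with
  | nil => rintro u w ⟨rfl, _⟩ _; exact Relation.ReflTransGen.refl
  | cons a t ih =>
    rintro u w ⟨ha, rfl, hw⟩ hu
    have hne : a ≠ D.a0 := by
      intro h0
      rw [h0] at hu
      exact D.h_not_B (D.arc0.2.1 ▸ hu)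
    exact Relation.ReflTransGen.head ⟨a, ha, hne, Or.inl ⟨rfl, rfl⟩⟩
      (ih hw (D.sep_fwd ha hu))

lemma has_inarc_of_B {w : ℕ} (hw : w ∈ D.B) : ∃ e ∈ G.arcs, G.tgt e = w := by
  obtain ⟨l, hl⟩ := hw
  rcases List.eq_nil_or_concat l with rfl | ⟨l', e, rfl⟩
  · exact ⟨D.a0, D.arc0.1, D.arc0.2.2.trans hl.1⟩
  · rw [List.concat_eq_append] at hl
    obtain ⟨z, _, hz⟩ := isWalk_append_split D.phylo hl
    exact ⟨e, hz.1, hz.2.2.1⟩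

lemma root_not_B {r : ℕ} (hr : IsRootN G r) : r ∉ D.B := by
  intro hrB
  obtain ⟨e, he, hte⟩ := D.has_inarc_of_B hrB
  have : e ∈ G.arcs.filter fun a => G.tgt a = r := Finset.mem_filter.mpr ⟨he, hte⟩
  have hpos : 0 < inDeg G r := Finset.card_pos.mpr ⟨e, this⟩
  have := hr.2
  omega

lemma conn_root {r : ℕ} (hr : IsRootN G r) :
    ∀ (n : ℕ) (v : ℕ), ({u | BelowV G u v}).ncard ≤ n → v ∈ G.verts → v ∉ D.B →
      Relation.ReflTransGen D.UR v r := by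
  intro n
  induction n with
  | zero =>
    intro v hn hv _
    exfalso
    have : v ∈ {u | BelowV G u v} := below_refl hv
    have := Set.ncard_pos (anc_finite D.phylo v) |>.mpr ⟨v, this⟩
    omega
  | succ n ih =>
    intro v hn hv hvB
    by_cases hvr : v = r
    · exact hvr ▸ Relation.ReflTransGen.refl
    -- v has an in-arc
    have hvroot : ¬ IsRootN G v := by
      intro hroot
      obtain ⟨r0, _, hu⟩ := D.phylo.root_exu
      exact hvr ((hu v hroot).trans (hu r hr).symm)
    have hin : 0 < inDeg G v := by
      rcases D.phylo.types v hv with h1 | h1 | h1 | h1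
      · exact absurd h1 hvroot
      · rw [h1.2.1]; omega
      · rw [h1.2.1]; omega
      · rw [h1.2.1]; omega
    obtain ⟨e, he⟩ := Finset.card_pos.mp hin
    have he' := Finset.mem_filter.mp he
    have hea : e ∈ G.arcs := he'.1
    have het : G.tgt e = v := he'.2
    have hsB : G.src e ∉ D.B := fun hs => hvB (het ▸ D.sep_fwd hea hs)
    have hse : G.src e ∈ G.verts := D.phylo.src_mem e hea
    have hne0 : e ≠ D.a0 := by
      intro h0
      rw [h0] at het
      apply hvB
      rw [← het, D.arc0.2.2]
      exact D.c_in_B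
    -- measure decreases
    have hsubset : {u | BelowV G u (G.src e)} ⊆ {u | BelowV G u v} := by
      intro u hu
      exact het ▸ below_arc hea hu (D.phylo.tgt_mem e hea)
    have hvnot : v ∉ {u | BelowV G u (G.src e)} := by
      rintro ⟨l, hl⟩
      exact D.phylo.acyclic v (l ++ [e]) (by simp)
        (isWalk_append_of hl ⟨hea, rfl, by rw [het]; exact ⟨rfl, hv⟩⟩)
    have hlt : ({u | BelowV G u (G.src e)}).ncard < ({u | BelowV G u v}).ncard := by
      apply Set.ncard_lt_ncard _ (anc_finite D.phylo v)
      exact ⟨hsubset, fun hsup => hvnot (hsup (below_refl hv))⟩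
    have step : D.UR v (G.src e) := ⟨e, hea, hne0, Or.inr ⟨rfl, het⟩⟩
    exact Relation.ReflTransGen.head step (ih (G.src e) (by omega) hse hsB)

lemma hc_not_conn : ¬ Relation.ReflTransGen D.UR D.h D.c := by
  have := D.cut.2
  rwa [D.arc0.2.1, D.arc0.2.2] at this

/-- The separation lemma: no arc other than `a0` enters `B` from outside. -/
lemma sep {b : ℕ} (hb : b ∈ G.arcs) (hne : b ≠ D.a0) (ht : G.tgt b ∈ D.B) :
    G.src b ∈ D.B := by
  by_contra hs
  obtain ⟨r, hr, _⟩ := D.phylo.root_exu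
  have h1 : Relation.ReflTransGen D.UR D.h r :=
    D.conn_root hr _ D.h le_rfl D.retic.1 D.h_not_B
  have h2 : Relation.ReflTransGen D.UR (G.src b) r :=
    D.conn_root hr _ (G.src b) le_rfl (D.phylo.src_mem b hb) hs
  have h3 : Relation.ReflTransGen D.UR (G.src b) (G.tgt b) :=
    Relation.ReflTransGen.single ⟨b, hb, hne, Or.inl ⟨rfl, rfl⟩⟩
  have h4 : Relation.ReflTransGen D.UR D.c (G.tgt b) := D.conn_c_of_B ht.choose_spec D.c_in_B
  have hsymm : Symmetric (Relation.ReflTransGen D.UR) :=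
    fun _ _ h => (@Relation.ReflTransGen.stdSymm _ _ ⟨fun a b hab => D.ur_symm hab⟩).symm _ _ h
  exact D.hc_not_conn (h1.trans ((hsymm h2).trans (h3.trans (hsymm h4))))

lemma arc_to_c {b : ℕ} (hb : b ∈ G.arcs) (ht : G.tgt b = D.c) : b = D.a0 := by
  by_contra hne
  have hs : G.src b ∈ D.B := D.sep hb hne (ht ▸ D.c_in_B)
  obtain ⟨l, hl⟩ := hs
  exact D.phylo.acyclic D.c (l ++ [b]) (by simp)
    (isWalk_append_of hl ⟨hb, rfl, by rw [ht]; exact ⟨rfl, D.c_mem⟩⟩)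

lemma mem_verts' {v : ℕ} :
    v ∈ G'.verts ↔ (v ∈ G.verts ∧ v ≠ D.h) ∨ ∃ w ∈ D.B, D.phi w = v := by
  have := Set.ext_iff.mp D.verts' v
  simpa [Set.mem_diff, SData.B] using this

lemma mem_arcs' {e : ℕ} :
    e ∈ G'.arcs ↔ (e ∈ G.arcs ∧ e ≠ D.a0) ∨ ∃ b ∈ arcsBelow G D.c, D.psi b = e := by
  have := Set.ext_iff.mp D.arcs' e
  simpa [Set.mem_diff] using this

lemma aset_iff {b : ℕ} :
    b ∈ arcsBelow G D.c ↔ b ∈ G.arcs ∧ G.src b ∈ D.B ∧ G.tgt b ∈ D.B := Iff.rfl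

lemma aset_of_src {b : ℕ} (hb : b ∈ G.arcs) (hs : G.src b ∈ D.B) :
    b ∈ arcsBelow G D.c := ⟨hb, hs, D.sep_fwd hb hs⟩

lemma aset_of_tgt {b : ℕ} (hb : b ∈ G.arcs) (hne : b ≠ D.a0) (ht : G.tgt b ∈ D.B) :
    b ∈ arcsBelow G D.c := ⟨hb, D.sep hb hne ht, ht⟩

lemma a0_not_aset : D.a0 ∉ arcsBelow G D.c := by
  rintro ⟨_, hs, _⟩
  exact D.h_not_B (D.arc0.2.1 ▸ hs)

lemma a1_not_aset : D.a1 ∉ arcsBelow G D.c := by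
  rintro ⟨_, _, ht⟩
  exact D.h_not_B (D.arc1.2.2 ▸ ht)

lemma a2_not_aset : D.a2 ∉ arcsBelow G D.c := by
  rintro ⟨_, _, ht⟩
  exact D.h_not_B (D.arc2.2.2 ▸ ht)

lemma keep_arcs' {b : ℕ} (hb : b ∈ G.arcs) (hne : b ≠ D.a0) : b ∈ G'.arcs :=
  D.mem_arcs'.mpr (Or.inl ⟨hb, hne⟩)

lemma a1_mem' : D.a1 ∈ G'.arcs := D.keep_arcs' D.arc1.1 (Ne.symm D.ne01)

lemma a2_mem' : D.a2 ∈ G'.arcs := D.keep_arcs' D.arc2.1 (Ne.symm D.ne02)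

lemma psi_mem' {b : ℕ} (hb : b ∈ arcsBelow G D.c) : D.psi b ∈ G'.arcs :=
  D.mem_arcs'.mpr (Or.inr ⟨b, hb, rfl⟩)

lemma old_mem_verts' {v : ℕ} (hv : v ∈ G.verts) (hne : v ≠ D.h) : v ∈ G'.verts :=
  D.mem_verts'.mpr (Or.inl ⟨hv, hne⟩)

lemma phi_mem_verts' {w : ℕ} (hw : w ∈ D.B) : D.phi w ∈ G'.verts :=
  D.mem_verts'.mpr (Or.inr ⟨w, hw, rfl⟩)

lemma B_mem_verts' {w : ℕ} (hw : w ∈ D.B) : w ∈ G'.verts :=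
  D.old_mem_verts' (D.B_sub w hw) (fun he => D.h_not_B (he ▸ hw))

/-- Classification of the arcs of `G'` together with their endpoints. -/
lemma arc_cases {e : ℕ} (he : e ∈ G'.arcs) :
    e = D.a1 ∨ e = D.a2 ∨
    (e ∈ G.arcs ∧ e ≠ D.a0 ∧ e ≠ D.a1 ∧ e ≠ D.a2 ∧
      G'.src e = G.src e ∧ G'.tgt e = G.tgt e) ∨
    (∃ b ∈ arcsBelow G D.c, e = D.psi b ∧
      G'.src e = D.phi (G.src b) ∧ G'.tgt e = D.phi (G.tgt b)) := by
  rcases D.mem_arcs'.mp he with ⟨hmem, hne⟩ | ⟨b, hb, rfl⟩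
  · by_cases h1 : e = D.a1
    · exact Or.inl h1
    by_cases h2 : e = D.a2
    · exact Or.inr (Or.inl h2)
    · exact Or.inr (Or.inr (Or.inl
        ⟨hmem, hne, h1, h2, (D.keep e hmem hne h1 h2).1, (D.keep e hmem hne h1 h2).2⟩))
  · exact Or.inr (Or.inr (Or.inr ⟨b, hb, rfl, (D.mapped b hb).1, (D.mapped b hb).2⟩))

lemma phi_not_verts {w : ℕ} (hw : w ∈ D.B) : D.phi w ∉ G.verts := D.freshphi w hw

/-- T1: walks of `G` ending outside `B ∪ {h}` are walks of `G'`. -/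
lemma walk_out_to' : ∀ {l : List ℕ} {u v : ℕ}, IsWalk G l u v → v ∉ D.B → v ≠ D.h →
    IsWalk G' l u v ∧ u ∉ D.B ∧ u ≠ D.h := by
  intro l
  induction l with
  | nil =>
    rintro u v ⟨rfl, hu⟩ hv1 hv2
    exact ⟨⟨rfl, D.old_mem_verts' hu hv2⟩, hv1, hv2⟩
  | cons a t ih =>
    rintro u v ⟨ha, rfl, hw⟩ hv1 hv2
    obtain ⟨hw', ht1, ht2⟩ := ih hw hv1 hv2
    have hne0 : a ≠ D.a0 := by
      intro h0
      rw [h0, D.arc0.2.2] at ht1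
      exact ht1 D.c_in_B
    have hne1 : a ≠ D.a1 := by
      intro h0; rw [h0, D.arc1.2.2] at ht2; exact ht2 rfl
    have hne2 : a ≠ D.a2 := by
      intro h0; rw [h0, D.arc2.2.2] at ht2; exact ht2 rfl
    have hkeep := D.keep a ha hne0 hne1 hne2
    refine ⟨⟨D.keep_arcs' ha hne0, hkeep.1, by rw [hkeep.2]; exact hw'⟩, ?_, ?_⟩
    · intro hs
      exact ht1 (D.sep_fwd ha hs)
    · intro hs
      exact hne0 (D.arc_from_h ha hs)

/-- T2: walks of `G'` ending outside `B ∪ {h}` (in old vertices) are walks of `G`. -/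
lemma walk_out_from' : ∀ {l : List ℕ} {u v : ℕ},
    IsWalk G' l u v → v ∈ G.verts → v ∉ D.B → v ≠ D.h →
    IsWalk G l u v ∧ u ∈ G.verts ∧ u ∉ D.B ∧ u ≠ D.h := by
  intro l
  induction l with
  | nil =>
    rintro u v ⟨rfl, _⟩ hv0 hv1 hv2
    exact ⟨⟨rfl, hv0⟩, hv0, hv1, hv2⟩
  | cons e t ih =>
    rintro u v ⟨he, rfl, hw⟩ hv0 hv1 hv2
    obtain ⟨hwG, hm0, hm1, hm2⟩ := ih hw hv0 hv1 hv2
    rcases D.arc_cases he with rfl | rfl | ⟨hmem, hne0, _, _, hsrc, htgt⟩ | ⟨b, hb, rfl, hsrc, htgt⟩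
    · rw [D.t1] at hm1
      exact absurd D.c_in_B hm1
    · rw [D.t2] at hm0
      exact absurd hm0 (D.phi_not_verts D.c_in_B)
    · rw [htgt] at hwG hm0 hm1 hm2
      refine ⟨⟨hmem, hsrc.symm, hwG⟩, ?_, ?_, ?_⟩
      · rw [hsrc]; exact D.phylo.src_mem e hmem
      · rw [hsrc]; intro hs; exact hm1 (D.sep_fwd hmem hs)
      · rw [hsrc]; intro hs; exact hne0 (D.arc_from_h hmem hs)
    · rw [htgt] at hm0
      exact absurd hm0 (D.phi_not_verts hb.2.2)

/-- T3a: walks of `G` inside `B` are walks of `G'`. -/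
lemma walk_in_to' : ∀ {l : List ℕ} {u v : ℕ}, IsWalk G l u v → u ∈ D.B →
    IsWalk G' l u v ∧ (∀ a ∈ l, a ∈ arcsBelow G D.c) ∧ v ∈ D.B := by
  intro l
  induction l with
  | nil =>
    rintro u v ⟨rfl, hu⟩ huB
    exact ⟨⟨rfl, D.B_mem_verts' huB⟩, by simp, huB⟩
  | cons a t ih =>
    rintro u v ⟨ha, rfl, hw⟩ huB
    have haset : a ∈ arcsBelow G D.c := D.aset_of_src ha huB
    obtain ⟨hw', harcs, hvB⟩ := ih hw haset.2.2
    have hne0 : a ≠ D.a0 := fun h0 => D.a0_not_aset (h0 ▸ haset)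
    have hne1 : a ≠ D.a1 := fun h0 => D.a1_not_aset (h0 ▸ haset)
    have hne2 : a ≠ D.a2 := fun h0 => D.a2_not_aset (h0 ▸ haset)
    have hkeep := D.keep a ha hne0 hne1 hne2
    refine ⟨⟨D.keep_arcs' ha hne0, hkeep.1, by rw [hkeep.2]; exact hw'⟩, ?_, hvB⟩
    intro b hbmem
    rcases List.mem_cons.mp hbmem with rfl | hbmem
    · exact haset
    · exact harcs b hbmem

/-- T3b: walks of `G'` starting inside `B` are walks of `G`. -/
lemma walk_in_from' : ∀ {l : List ℕ} {u v : ℕ}, IsWalk G' l u v → u ∈ D.B →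
    IsWalk G l u v ∧ (∀ a ∈ l, a ∈ arcsBelow G D.c) ∧ v ∈ D.B := by
  intro l
  induction l with
  | nil =>
    rintro u v ⟨rfl, _⟩ huB
    exact ⟨⟨rfl, D.B_sub u huB⟩, by simp, huB⟩
  | cons e t ih =>
    rintro u v ⟨he, rfl, hw⟩ huB
    rcases D.arc_cases he with rfl | rfl | ⟨hmem, hne0, _, _, hsrc, htgt⟩ | ⟨b, hb, rfl, hsrc, htgt⟩
    · rw [D.s1] at huB
      exact absurd huB D.p1_not_B
    · rw [D.s2] at huB
      exact absurd huB D.p2_not_B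
    · rw [hsrc] at huB
      have haset : e ∈ arcsBelow G D.c := D.aset_of_src hmem huB
      rw [htgt] at hw
      obtain ⟨hwG, harcs, hvB⟩ := ih hw haset.2.2
      refine ⟨⟨hmem, hsrc.symm, hwG⟩, ?_, hvB⟩
      intro b hbmem
      rcases List.mem_cons.mp hbmem with rfl | hbmem
      · exact haset
      · exact harcs b hbmem
    · rw [hsrc] at huB
      exact absurd (D.B_sub _ huB) (D.phi_not_verts hb.2.1)

/-- T4: copies of walks inside `B` are walks of `G'`. -/
lemma walk_copy_to' : ∀ {l : List ℕ} {w v : ℕ}, IsWalk G l w v → w ∈ D.B →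
    IsWalk G' (l.map D.psi) (D.phi w) (D.phi v) := by
  intro l
  induction l with
  | nil =>
    rintro w v ⟨rfl, _⟩ hwB
    exact ⟨rfl, D.phi_mem_verts' hwB⟩
  | cons a t ih =>
    rintro w v ⟨ha, rfl, hw⟩ hwB
    have haset : a ∈ arcsBelow G D.c := D.aset_of_src ha hwB
    have hmap := D.mapped a haset
    exact ⟨D.psi_mem' haset, hmap.1, by rw [hmap.2]; exact ih hw haset.2.2⟩

/-- T5: walks of `G'` starting in the copy stay in the copy and project to `G`. -/
lemma walk_copy_from' : ∀ {l : List ℕ} {u v' : ℕ}, IsWalk G' l u v' →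
    ∀ w ∈ D.B, u = D.phi w →
    ∃ l0 v, l = l0.map D.psi ∧ v' = D.phi v ∧ IsWalk G l0 w v ∧ v ∈ D.B := by
  intro l
  induction l with
  | nil =>
    rintro u v' ⟨rfl, _⟩ w hwB rfl
    exact ⟨[], w, rfl, rfl, ⟨rfl, D.B_sub w hwB⟩, hwB⟩
  | cons e t ih =>
    rintro u v' ⟨he, rfl, hw⟩ w hwB hphiw
    rcases D.arc_cases he with rfl | rfl | ⟨hmem, _, _, _, hsrc, htgt⟩ | ⟨b, hb, rfl, hsrc, htgt⟩
    · rw [D.s1] at hphiw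
      have hp : D.p1 ∈ G.verts := D.arc1.2.1 ▸ D.phylo.src_mem D.a1 D.arc1.1
      exact absurd (hphiw ▸ hp) (D.phi_not_verts hwB)
    · rw [D.s2] at hphiw
      have hp : D.p2 ∈ G.verts := D.arc2.2.1 ▸ D.phylo.src_mem D.a2 D.arc2.1
      exact absurd (hphiw ▸ hp) (D.phi_not_verts hwB)
    · rw [hsrc] at hphiw
      exact absurd (hphiw ▸ D.phylo.src_mem e hmem) (D.phi_not_verts hwB)
    · rw [hsrc] at hphiw
      have hsw : G.src b = w := D.injphi hb.2.1 hwB hphiw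
      obtain ⟨l0, v, hmap, hv', hwalk, hvB⟩ := ih hw (G.tgt b) hb.2.2 htgt
      exact ⟨b :: l0, v, by simp [hmap], hv', ⟨hb.1, hsw, hwalk⟩, hvB⟩

lemma h_ne_c : D.h ≠ D.c := fun he => D.h_not_B (he ▸ D.c_in_B)

lemma c_ne_h : D.c ≠ D.h := fun he => D.h_not_B (he ▸ D.c_in_B)

lemma inDeg_c : inDeg G D.c = 1 := by
  have : G.arcs.filter (fun a => G.tgt a = D.c) = {D.a0} := by
    ext a
    simp only [Finset.mem_filter, Finset.mem_singleton]
    constructor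
    · rintro ⟨ha, ht⟩
      exact D.arc_to_c ha ht
    · rintro rfl
      exact ⟨D.arc0.1, D.arc0.2.2⟩
  rw [inDeg, this, Finset.card_singleton]

lemma inDeg_c' : inDeg G' D.c = 1 := by
  have : G'.arcs.filter (fun a => G'.tgt a = D.c) = {D.a1} := by
    ext a
    simp only [Finset.mem_filter, Finset.mem_singleton]
    constructor
    · rintro ⟨ha, ht⟩
      rcases D.arc_cases ha with rfl | rfl | ⟨hmem, hne0, _, _, _, htgt⟩ | ⟨b, hb, rfl, _, htgt⟩
      · rfl
      · rw [D.t2] at ht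
        exact absurd (show D.phi D.c ∈ G.verts by rw [ht]; exact D.c_mem)
          (D.phi_not_verts D.c_in_B)
      · rw [htgt] at ht
        exact absurd (D.arc_to_c hmem ht) hne0
      · rw [htgt] at ht
        exact absurd (ht ▸ D.c_mem) (D.phi_not_verts hb.2.2)
    · rintro rfl
      exact ⟨D.a1_mem', D.t1⟩
  rw [inDeg, this, Finset.card_singleton]

lemma inDeg_old {v : ℕ} (hv : v ∈ G.verts) (hvh : v ≠ D.h) (hvc : v ≠ D.c) :
    inDeg G' v = inDeg G v := by
  have : G'.arcs.filter (fun a => G'.tgt a = v) = G.arcs.filter (fun a => G.tgt a = v) := by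
    ext a
    simp only [Finset.mem_filter]
    constructor
    · rintro ⟨ha, ht⟩
      rcases D.arc_cases ha with rfl | rfl | ⟨hmem, _, _, _, _, htgt⟩ | ⟨b, hb, rfl, _, htgt⟩
      · rw [D.t1] at ht
        exact absurd ht.symm hvc
      · rw [D.t2] at ht
        exact absurd (ht ▸ hv) (D.phi_not_verts D.c_in_B)
      · exact ⟨hmem, htgt ▸ ht⟩
      · rw [htgt] at ht
        exact absurd (ht ▸ hv) (D.phi_not_verts hb.2.2)
    · rintro ⟨ha, ht⟩
      have hne0 : a ≠ D.a0 := fun h0 => hvc (by rw [← ht, h0, D.arc0.2.2])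
      have hne1 : a ≠ D.a1 := fun h0 => hvh (by rw [← ht, h0, D.arc1.2.2])
      have hne2 : a ≠ D.a2 := fun h0 => hvh (by rw [← ht, h0, D.arc2.2.2])
      exact ⟨D.keep_arcs' ha hne0, by rw [(D.keep a ha hne0 hne1 hne2).2]; exact ht⟩
  rw [inDeg, inDeg, this]

lemma outDeg_old {v : ℕ} (hv : v ∈ G.verts) (hvh : v ≠ D.h) :
    outDeg G' v = outDeg G v := by
  have : G'.arcs.filter (fun a => G'.src a = v) = G.arcs.filter (fun a => G.src a = v) := by
    ext a
    simp only [Finset.mem_filter]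
    constructor
    · rintro ⟨ha, hs⟩
      rcases D.arc_cases ha with rfl | rfl | ⟨hmem, _, _, _, hsrc, _⟩ | ⟨b, hb, rfl, hsrc, _⟩
      · rw [D.s1] at hs
        exact ⟨D.arc1.1, by rw [D.arc1.2.1]; exact hs⟩
      · rw [D.s2] at hs
        exact ⟨D.arc2.1, by rw [D.arc2.2.1]; exact hs⟩
      · exact ⟨hmem, hsrc ▸ hs⟩
      · rw [hsrc] at hs
        exact absurd (hs ▸ hv) (D.phi_not_verts hb.2.1)
    · rintro ⟨ha, hs⟩
      have hne0 : a ≠ D.a0 := fun h0 => hvh (by rw [← hs, h0, D.arc0.2.1])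
      refine ⟨D.keep_arcs' ha hne0, ?_⟩
      by_cases h1 : a = D.a1
      · rw [h1, D.s1, ← D.arc1.2.1, ← h1]; exact hs
      by_cases h2 : a = D.a2
      · rw [h2, D.s2, ← D.arc2.2.1, ← h2]; exact hs
      · rw [(D.keep a ha hne0 h1 h2).1]; exact hs
  rw [outDeg, outDeg, this]

lemma outDeg_copy {w : ℕ} (hw : w ∈ D.B) : outDeg G' (D.phi w) = outDeg G w := by
  have himg : G'.arcs.filter (fun a => G'.src a = D.phi w) =
      (G.arcs.filter (fun b => G.src b = w)).image D.psi := by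
    ext e
    simp only [Finset.mem_filter, Finset.mem_image]
    constructor
    · rintro ⟨he, hs⟩
      rcases D.arc_cases he with rfl | rfl | ⟨hmem, _, _, _, hsrc, _⟩ | ⟨b, hb, rfl, hsrc, _⟩
      · rw [D.s1] at hs
        have hp : D.p1 ∈ G.verts := D.arc1.2.1 ▸ D.phylo.src_mem D.a1 D.arc1.1
        exact absurd (hs ▸ hp) (D.phi_not_verts hw)
      · rw [D.s2] at hs
        have hp : D.p2 ∈ G.verts := D.arc2.2.1 ▸ D.phylo.src_mem D.a2 D.arc2.1
        exact absurd (hs ▸ hp) (D.phi_not_verts hw)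
      · rw [hsrc] at hs
        exact absurd (hs ▸ D.phylo.src_mem e hmem) (D.phi_not_verts hw)
      · rw [hsrc] at hs
        exact ⟨b, ⟨hb.1, D.injphi hb.2.1 hw hs⟩, rfl⟩
    · rintro ⟨b, ⟨hb, hsb⟩, rfl⟩
      have haset : b ∈ arcsBelow G D.c := D.aset_of_src hb (hsb ▸ hw)
      exact ⟨D.psi_mem' haset, by rw [(D.mapped b haset).1, hsb]⟩
  rw [outDeg, outDeg, himg, Finset.card_image_of_injOn]
  intro x hx y hy hxy
  simp only [Finset.coe_filter, Set.mem_setOf_eq] at hx hy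
  exact D.injpsi (D.aset_of_src hx.1 (hx.2 ▸ hw)) (D.aset_of_src hy.1 (hy.2 ▸ hw)) hxy

lemma inDeg_copy {w : ℕ} (hw : w ∈ D.B) (hwc : w ≠ D.c) :
    inDeg G' (D.phi w) = inDeg G w := by
  have himg : G'.arcs.filter (fun a => G'.tgt a = D.phi w) =
      (G.arcs.filter (fun b => G.tgt b = w)).image D.psi := by
    ext e
    simp only [Finset.mem_filter, Finset.mem_image]
    constructor
    · rintro ⟨he, ht⟩
      rcases D.arc_cases he with rfl | rfl | ⟨hmem, _, _, _, _, htgt⟩ | ⟨b, hb, rfl, _, htgt⟩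
      · rw [D.t1] at ht
        exact absurd (ht ▸ D.c_mem) (D.phi_not_verts hw)
      · rw [D.t2] at ht
        exact absurd (D.injphi D.c_in_B hw ht).symm hwc
      · rw [htgt] at ht
        exact absurd (ht ▸ D.phylo.tgt_mem e hmem) (D.phi_not_verts hw)
      · rw [htgt] at ht
        exact ⟨b, ⟨hb.1, D.injphi hb.2.2 hw ht⟩, rfl⟩
    · rintro ⟨b, ⟨hb, htb⟩, rfl⟩
      have hne0 : b ≠ D.a0 := fun h0 => hwc (by rw [← htb, h0, D.arc0.2.2])
      have haset : b ∈ arcsBelow G D.c := D.aset_of_tgt hb hne0 (htb ▸ hw)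
      exact ⟨D.psi_mem' haset, by rw [(D.mapped b haset).2, htb]⟩
  rw [inDeg, inDeg, himg, Finset.card_image_of_injOn]
  intro x hx y hy hxy
  simp only [Finset.coe_filter, Set.mem_setOf_eq] at hx hy
  have hnex : x ≠ D.a0 := fun h0 => hwc (by rw [← hx.2, h0, D.arc0.2.2])
  have hney : y ≠ D.a0 := fun h0 => hwc (by rw [← hy.2, h0, D.arc0.2.2])
  exact D.injpsi (D.aset_of_tgt hx.1 hnex (hx.2 ▸ hw)) (D.aset_of_tgt hy.1 hney (hy.2 ▸ hw)) hxy

lemma inDeg_phic' : inDeg G' (D.phi D.c) = 1 := by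
  have : G'.arcs.filter (fun a => G'.tgt a = D.phi D.c) = {D.a2} := by
    ext e
    simp only [Finset.mem_filter, Finset.mem_singleton]
    constructor
    · rintro ⟨he, ht⟩
      rcases D.arc_cases he with rfl | rfl | ⟨hmem, _, _, _, _, htgt⟩ | ⟨b, hb, rfl, _, htgt⟩
      · rw [D.t1] at ht
        exact absurd (ht ▸ D.c_mem) (D.phi_not_verts D.c_in_B)
      · rfl
      · rw [htgt] at ht
        exact absurd (ht ▸ D.phylo.tgt_mem e hmem) (D.phi_not_verts D.c_in_B)
      · rw [htgt] at ht
        have : G.tgt b = D.c := D.injphi hb.2.2 D.c_in_B ht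
        exact absurd (D.arc_to_c hb.1 this ▸ hb) D.a0_not_aset
    · rintro rfl
      exact ⟨D.a2_mem', D.t2⟩
  rw [inDeg, this, Finset.card_singleton]

lemma p1_ne_c : D.p1 ≠ D.c := by
  intro he
  refine D.phylo.acyclic D.c [D.a1, D.a0] (by simp) ?_
  exact ⟨D.arc1.1, by rw [D.arc1.2.1, he], by rw [D.arc1.2.2]; exact D.walk_a0⟩

include D

lemma src_mem' : ∀ e ∈ G'.arcs, G'.src e ∈ G'.verts := by
  intro e he
  rcases D.arc_cases he with rfl | rfl | ⟨hmem, hne0, _, _, hsrc, _⟩ | ⟨b, hb, rfl, hsrc, _⟩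
  · rw [D.s1]
    exact D.old_mem_verts' (D.arc1.2.1 ▸ D.phylo.src_mem D.a1 D.arc1.1)
      (fun he => D.phylo.no_loop D.a1 D.arc1.1 (by rw [D.arc1.2.1, D.arc1.2.2, he]))
  · rw [D.s2]
    exact D.old_mem_verts' (D.arc2.2.1 ▸ D.phylo.src_mem D.a2 D.arc2.1)
      (fun he => D.phylo.no_loop D.a2 D.arc2.1 (by rw [D.arc2.2.1, D.arc2.2.2, he]))
  · rw [hsrc]
    exact D.old_mem_verts' (D.phylo.src_mem e hmem)
      (fun he => hne0 (D.arc_from_h hmem he))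
  · rw [hsrc]
    exact D.phi_mem_verts' hb.2.1

lemma tgt_mem' : ∀ e ∈ G'.arcs, G'.tgt e ∈ G'.verts := by
  intro e he
  rcases D.arc_cases he with rfl | rfl | ⟨hmem, _, hne1, hne2, _, htgt⟩ | ⟨b, hb, rfl, _, htgt⟩
  · rw [D.t1]
    exact D.old_mem_verts' D.c_mem D.c_ne_h
  · rw [D.t2]
    exact D.phi_mem_verts' D.c_in_B
  · rw [htgt]
    refine D.old_mem_verts' (D.phylo.tgt_mem e hmem) (fun he => ?_)
    rcases D.arc_to_h hmem he with h1 | h2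
    · exact hne1 h1
    · exact hne2 h2
  · rw [htgt]
    exact D.phi_mem_verts' hb.2.2

lemma no_loop' : ∀ e ∈ G'.arcs, G'.src e ≠ G'.tgt e := by
  intro e he
  rcases D.arc_cases he with rfl | rfl | ⟨hmem, _, _, _, hsrc, htgt⟩ | ⟨b, hb, rfl, hsrc, htgt⟩
  · rw [D.s1, D.t1]
    exact D.p1_ne_c
  · rw [D.s2, D.t2]
    intro he2
    have hp : D.p2 ∈ G.verts := D.arc2.2.1 ▸ D.phylo.src_mem D.a2 D.arc2.1
    exact D.phi_not_verts D.c_in_B (he2 ▸ hp)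
  · rw [hsrc, htgt]
    exact D.phylo.no_loop e hmem
  · rw [hsrc, htgt]
    intro he2
    exact D.phylo.no_loop b hb.1 (D.injphi hb.2.1 hb.2.2 he2)

lemma walk_unchanged_from' {l : List ℕ} {u v : ℕ} (hw : IsWalk G' l u v)
    (harcs : ∀ e ∈ l, e ∈ G.arcs ∧ G'.src e = G.src e ∧ G'.tgt e = G.tgt e)
    (hv : v ∈ G.verts) : IsWalk G l u v := by
  induction l generalizing u with
  | nil => exact ⟨hw.1, by rw [hw.1]; exact hv⟩
  | cons e t ih =>
    obtain ⟨hmem, hsrc, htgt⟩ := harcs e (by simp)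
    refine ⟨hmem, by rw [← hsrc]; exact hw.2.1, ?_⟩
    rw [← htgt]
    exact ih hw.2.2 (fun b hb => harcs b (by simp [hb]))

lemma acyclic' : ∀ (v : ℕ) (l : List ℕ), l ≠ [] → ¬ IsWalk G' l v v := by
  intro v l hlne hwalk
  by_cases hv : ∃ w ∈ D.B, v = D.phi w
  · obtain ⟨w, hwB, rfl⟩ := hv
    obtain ⟨l0, v0, hmap, hphiv, hwalkG, hv0B⟩ := D.walk_copy_from' hwalk w hwB rfl
    have hv0 : w = v0 := D.injphi hwB hv0B hphiv
    rw [← hv0] at hwalkG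
    have hl0 : l0 ≠ [] := by
      intro h0
      rw [h0] at hmap
      exact hlne (by simpa using hmap)
    exact D.phylo.acyclic w l0 hl0 hwalkG
  · -- v is not a copied vertex
    have htgt_notphi : ∀ e ∈ l, ∀ w ∈ D.B, G'.tgt e ≠ D.phi w := by
      intro e hel w hwB heq
      obtain ⟨s, t, rfl⟩ := List.append_of_mem hel
      obtain ⟨mid, _, hwt⟩ := isWalk_append_split' D.src_mem' hwalk
      obtain ⟨l0, v0, _, hphiv, _, hv0B⟩ := D.walk_copy_from' hwt.2.2 w hwB heq
      exact hv (⟨v0, hv0B, hphiv⟩)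
    by_cases hvB : v ∈ D.B
    · obtain ⟨hwG, _, _⟩ := D.walk_in_from' hwalk hvB
      exact D.phylo.acyclic v l hlne hwG
    · have htgt_notB : ∀ e ∈ l, G'.tgt e ∉ D.B := by
        intro e hel htB
        obtain ⟨s, t, rfl⟩ := List.append_of_mem hel
        obtain ⟨mid, _, hwt⟩ := isWalk_append_split' D.src_mem' hwalk
        obtain ⟨_, _, hvB'⟩ := D.walk_in_from' hwt.2.2 htB
        exact hvB hvB'
      have harcs : ∀ e ∈ l, e ∈ G.arcs ∧ G'.src e = G.src e ∧ G'.tgt e = G.tgt e := by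
        intro e hel
        have he : e ∈ G'.arcs := walk_arcs_mem hwalk e hel
        rcases D.arc_cases he with rfl | rfl | ⟨hmem, _, _, _, hsrc, htgt⟩ |
            ⟨b, hb, rfl, _, htgt⟩
        · exact absurd (D.t1 ▸ D.c_in_B) (htgt_notB _ hel)
        · exact absurd D.t2 (htgt_notphi _ hel D.c D.c_in_B)
        · exact ⟨hmem, hsrc, htgt⟩
        · exact absurd htgt (htgt_notphi _ hel _ hb.2.2)
      have hvverts : v ∈ G.verts := by
        cases l with
        | nil => exact absurd rfl hlne
        | cons e t =>
          have h1 := (harcs e (by simp)).2.1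
          rw [← hwalk.2.1, h1]
          exact D.phylo.src_mem e (harcs e (by simp)).1
      exact D.phylo.acyclic v l hlne (D.walk_unchanged_from' hwalk harcs hvverts)

lemma inDeg_old_all {v : ℕ} (hv : v ∈ G.verts) (hvh : v ≠ D.h) :
    inDeg G' v = inDeg G v := by
  by_cases hvc : v = D.c
  · rw [hvc, D.inDeg_c', D.inDeg_c]
  · exact D.inDeg_old hv hvh hvc

lemma inDeg_copy_all {w : ℕ} (hw : w ∈ D.B) : inDeg G' (D.phi w) = inDeg G w := by
  by_cases hwc : w = D.c
  · rw [hwc, D.inDeg_phic', D.inDeg_c]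
  · exact D.inDeg_copy hw hwc

lemma h_ne_leafish {v : ℕ} (hv : v ∈ G.verts) (hvB : v ∈ D.B) : v ≠ D.h :=
  fun he => D.h_not_B (he ▸ hvB)

lemma root_is_root' {r : ℕ} (hr : IsRootN G r) : IsRootN G' r := by
  have hrh : r ≠ D.h := by
    intro he
    have := D.retic.2.1
    have := hr.2
    rw [he] at this
    omega
  refine ⟨D.old_mem_verts' hr.1 hrh, ?_⟩
  rw [D.inDeg_old_all hr.1 hrh]
  exact hr.2

lemma root_unique' {r v : ℕ} (hr : IsRootN G r) (hu : ∀ x, IsRootN G x → x = r)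
    (hv : IsRootN G' v) : v = r := by
  rcases D.mem_verts'.mp hv.1 with ⟨hmem, hneh⟩ | ⟨w, hwB, rfl⟩
  · have : inDeg G v = 0 := by rw [← D.inDeg_old_all hmem hneh]; exact hv.2
    exact hu v ⟨hmem, this⟩
  · exfalso
    have : inDeg G w = 0 := by rw [← D.inDeg_copy_all hwB]; exact hv.2
    have hwr : w = r := hu w ⟨D.B_sub w hwB, this⟩
    exact D.root_not_B hr (hwr ▸ hwB)

lemma phylo' : IsPhylo G' := by
  obtain ⟨r, hr, hru⟩ := D.phylo.root_exu
  have hru' : ∀ x, IsRootN G x → x = r := fun x hx => hru x hx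
  refine ⟨D.src_mem', D.tgt_mem', D.no_loop', D.acyclic', ?_, ?_, ?_⟩
  · exact ⟨r, D.root_is_root' hr, fun v hv => D.root_unique' hr hru' hv⟩
  · intro v hv
    have hvr : v = r := D.root_unique' hr hru' hv
    have hrh : r ≠ D.h := by
      have := D.retic.2.1
      have := hr.2
      intro he
      rw [he] at this
      omega
    rw [hvr, D.outDeg_old hr.1 hrh]
    exact D.phylo.root_out r hr
  · intro v hv
    rcases D.mem_verts'.mp hv with ⟨hmem, hneh⟩ | ⟨w, hwB, rfl⟩
    · have hdin : inDeg G' v = inDeg G v := D.inDeg_old_all hmem hneh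
      have hdout : outDeg G' v = outDeg G v := D.outDeg_old hmem hneh
      rcases D.phylo.types v hmem with h1 | h1 | h1 | h1
      · exact Or.inl ⟨hv, by rw [hdin]; exact h1.2⟩
      · exact Or.inr (Or.inl ⟨hv, by rw [hdin]; exact h1.2.1, by rw [hdout]; exact h1.2.2⟩)
      · exact Or.inr (Or.inr (Or.inl ⟨hv, by rw [hdin]; exact h1.2.1,
          by rw [hdout]; exact h1.2.2⟩))
      · exact Or.inr (Or.inr (Or.inr ⟨hv, by rw [hdin]; exact h1.2.1,
          by rw [hdout]; exact h1.2.2⟩))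
    · have hdin : inDeg G' (D.phi w) = inDeg G w := D.inDeg_copy_all hwB
      have hdout : outDeg G' (D.phi w) = outDeg G w := D.outDeg_copy hwB
      rcases D.phylo.types w (D.B_sub w hwB) with h1 | h1 | h1 | h1
      · exfalso
        exact D.root_not_B hr ((hru' w h1) ▸ hwB)
      · exact Or.inr (Or.inl ⟨hv, by rw [hdin]; exact h1.2.1, by rw [hdout]; exact h1.2.2⟩)
      · exact Or.inr (Or.inr (Or.inl ⟨hv, by rw [hdin]; exact h1.2.1,
          by rw [hdout]; exact h1.2.2⟩))
      · exact Or.inr (Or.inr (Or.inr ⟨hv, by rw [hdin]; exact h1.2.1,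
          by rw [hdout]; exact h1.2.2⟩))

omit D in
lemma ncard_sprod {α β : Type*} (s : Set α) (t : Set β) :
    (s ×ˢ t).ncard = s.ncard * t.ncard := by
  rw [← Nat.card_coe_set_eq, ← Nat.card_coe_set_eq, ← Nat.card_coe_set_eq,
    Nat.card_congr (Equiv.Set.prod s t), Nat.card_prod]

omit D in
lemma append_sep_inj {e : ℕ} : ∀ {l1 l1' l2 l2' : List ℕ},
    l1 ++ e :: l2 = l1' ++ e :: l2' → e ∉ l1 → e ∉ l1' → l1 = l1' ∧ l2 = l2' := by
  intro l1
  induction l1 with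
  | nil =>
    intro l1' l2 l2' heq h1 h1'
    cases l1' with
    | nil => simpa using heq
    | cons b t =>
      exfalso
      simp only [List.nil_append, List.cons_append, List.cons.injEq] at heq
      exact h1' (by rw [heq.1]; simp)
  | cons a s ih =>
    intro l1' l2 l2' heq h1 h1'
    cases l1' with
    | nil =>
      exfalso
      simp only [List.cons_append, List.nil_append, List.cons.injEq] at heq
      exact h1 (by rw [← heq.1]; simp)
    | cons b t =>
      simp only [List.cons_append, List.cons.injEq] at heq
      obtain ⟨h2, h3⟩ := ih heq.2 (fun hm => h1 (by simp [hm])) (fun hm => h1' (by simp [hm]))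
      exact ⟨by rw [heq.1, h2], h3⟩

lemma map_psi_inj : ∀ {l l' : List ℕ}, (∀ a ∈ l, a ∈ arcsBelow G D.c) →
    (∀ a ∈ l', a ∈ arcsBelow G D.c) → l.map D.psi = l'.map D.psi → l = l' := by
  intro l
  induction l with
  | nil =>
    intro l' _ _ heq
    cases l' with
    | nil => rfl
    | cons b t => simp at heq
  | cons a s ih =>
    intro l' h1 h2 heq
    cases l' with
    | nil => simp at heq
    | cons b t =>
      simp only [List.map_cons, List.cons.injEq] at heq
      have hab : a = b := D.injpsi (h1 a (by simp)) (h2 b (by simp)) heq.1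
      rw [hab, ih (fun x hx => h1 x (by simp [hx])) (fun x hx => h2 x (by simp [hx])) heq.2]

/-- Arcs on a walk ending outside `B ∪ {h}` point outside `B ∪ {h}`. -/
lemma arcs_out_props {l : List ℕ} {u v : ℕ} (hw : IsWalk G l u v) (hv1 : v ∉ D.B)
    (hv2 : v ≠ D.h) : ∀ a ∈ l, G.tgt a ∉ D.B ∧ G.tgt a ≠ D.h := by
  intro a hal
  obtain ⟨s, t, rfl⟩ := List.append_of_mem hal
  obtain ⟨mid, _, hwt⟩ := isWalk_append_split D.phylo hw
  obtain ⟨_, h1, h2⟩ := D.walk_out_to' hwt.2.2 hv1 hv2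
  exact ⟨h1, h2⟩

lemma a1_not_mem_out {l : List ℕ} {u v : ℕ} (hw : IsWalk G l u v) (hv1 : v ∉ D.B)
    (hv2 : v ≠ D.h) : D.a1 ∉ l := by
  intro hm
  exact (D.arcs_out_props hw hv1 hv2 D.a1 hm).2 D.arc1.2.2

lemma a2_not_mem_out {l : List ℕ} {u v : ℕ} (hw : IsWalk G l u v) (hv1 : v ∉ D.B)
    (hv2 : v ≠ D.h) : D.a2 ∉ l := by
  intro hm
  exact (D.arcs_out_props hw hv1 hv2 D.a2 hm).2 D.arc2.2.2

/-- Crossing decomposition for `G`-walks into `B`. -/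
lemma crossing_G : ∀ {l : List ℕ} {u x : ℕ}, IsWalk G l u x → x ∈ D.B → u ∉ D.B →
    ∃ l1 l2, l = l1 ++ D.a0 :: l2 ∧ IsWalk G l1 u D.h ∧ IsWalk G l2 D.c x := by
  intro l
  induction l with
  | nil =>
    rintro u x ⟨rfl, _⟩ hx hu
    exact absurd hx hu
  | cons a t ih =>
    rintro u x ⟨ha, rfl, hw⟩ hx hu
    by_cases htB : G.tgt a ∈ D.B
    · have ha0 : a = D.a0 := by
        by_contra hne
        exact hu (D.sep ha hne htB)
      subst ha0
      refine ⟨[], t, rfl, ⟨D.arc0.2.1, ?_⟩, by rw [← D.arc0.2.2]; exact hw⟩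
      rw [D.arc0.2.1]
      exact D.retic.1
    · obtain ⟨l1, l2, rfl, hw1, hw2⟩ := ih hw hx htB
      exact ⟨a :: l1, l2, rfl, ⟨ha, rfl, hw1⟩, hw2⟩

/-- Crossing decomposition for `G'`-walks into `B`. -/
lemma crossing_G'_B : ∀ {l : List ℕ} {u x : ℕ}, IsWalk G' l u x → x ∈ D.B → u ∉ D.B →
    (∀ w ∈ D.B, u ≠ D.phi w) →
    ∃ l1 l2, l = l1 ++ D.a1 :: l2 ∧ IsWalk G' l1 u D.p1 ∧ IsWalk G' l2 D.c x := by
  intro l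
  induction l with
  | nil =>
    rintro u x ⟨rfl, _⟩ hx hu _
    exact absurd hx hu
  | cons e t ih =>
    rintro u x ⟨he, rfl, hw⟩ hx hu huphi
    by_cases htB : G'.tgt e ∈ D.B
    · have he1 : e = D.a1 := by
        rcases D.arc_cases he with rfl | rfl | ⟨hmem, hne0, _, _, hsrc, htgt⟩ |
            ⟨b, hb, rfl, hsrc, htgt⟩
        · rfl
        · rw [D.t2] at htB
          exact absurd (D.B_sub _ htB) (D.phi_not_verts D.c_in_B)
        · rw [htgt] at htB
          rw [hsrc] at hu
          exact absurd (D.sep hmem hne0 htB) hu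
        · rw [htgt] at htB
          exact absurd (D.B_sub _ htB) (D.phi_not_verts hb.2.2)
      subst he1
      refine ⟨[], t, rfl, ⟨D.s1, ?_⟩, by rw [← D.t1]; exact hw⟩
      rw [D.s1]
      exact D.mem_verts'.mpr (Or.inl ⟨D.arc1.2.1 ▸ D.phylo.src_mem D.a1 D.arc1.1,
        fun hh => D.phylo.no_loop D.a1 D.arc1.1 (by rw [D.arc1.2.1, D.arc1.2.2, hh])⟩)
    · by_cases htphi : ∃ w ∈ D.B, G'.tgt e = D.phi w
      · exfalso
        obtain ⟨w, hwB, heq⟩ := htphi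
        obtain ⟨l0, v0, _, hphiv, _, hv0B⟩ := D.walk_copy_from' hw w hwB heq
        exact D.phi_not_verts hv0B (hphiv ▸ D.B_sub x hx)
      · obtain ⟨l1, l2, rfl, hw1, hw2⟩ := ih hw hx htB
          (fun w hwB heq => htphi ⟨w, hwB, heq⟩)
        exact ⟨e :: l1, l2, rfl, ⟨he, rfl, hw1⟩, hw2⟩

/-- Crossing decomposition for `G'`-walks into the copy of `B`. -/
lemma crossing_G'_phi : ∀ {l : List ℕ} {u x : ℕ}, IsWalk G' l u (D.phi x) → x ∈ D.B →
    u ∉ D.B → (∀ w ∈ D.B, u ≠ D.phi w) →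
    ∃ l1 l2, l = l1 ++ D.a2 :: l2 ∧ IsWalk G' l1 u D.p2 ∧
      IsWalk G' l2 (D.phi D.c) (D.phi x) := by
  intro l
  induction l with
  | nil =>
    rintro u x hw hx hu huphi
    exact absurd hw.1 (huphi x hx)
  | cons e t ih =>
    rintro u x ⟨he, rfl, hw⟩ hx hu huphi
    by_cases htphi : ∃ w ∈ D.B, G'.tgt e = D.phi w
    · have he2 : e = D.a2 := by
        obtain ⟨w, hwB, heq⟩ := htphi
        rcases D.arc_cases he with rfl | rfl | ⟨hmem, _, _, _, hsrc, htgt⟩ |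
            ⟨b, hb, rfl, hsrc, htgt⟩
        · rw [D.t1] at heq
          exact absurd (heq ▸ D.c_mem) (D.phi_not_verts hwB)
        · rfl
        · rw [htgt] at heq
          exact absurd (heq ▸ D.phylo.tgt_mem e hmem) (D.phi_not_verts hwB)
        · rw [hsrc] at huphi
          exact absurd rfl (huphi _ hb.2.1)
      subst he2
      refine ⟨[], t, rfl, ⟨D.s2, ?_⟩, by rw [← D.t2]; exact hw⟩
      rw [D.s2]
      exact D.mem_verts'.mpr (Or.inl ⟨D.arc2.2.1 ▸ D.phylo.src_mem D.a2 D.arc2.1,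
        fun hh => D.phylo.no_loop D.a2 D.arc2.1 (by rw [D.arc2.2.1, D.arc2.2.2, hh])⟩)
    · by_cases htB : G'.tgt e ∈ D.B
      · exfalso
        obtain ⟨_, _, hvB'⟩ := D.walk_in_from' hw htB
        exact D.phi_not_verts hx (D.B_sub _ hvB')
      · obtain ⟨l1, l2, rfl, hw1, hw2⟩ := ih hw hx htB
          (fun w hwB heq => htphi ⟨w, hwB, heq⟩)
        exact ⟨e :: l1, l2, rfl, ⟨he, rfl, hw1⟩, hw2⟩

lemma p1_ne_h : D.p1 ≠ D.h :=
  fun he => D.phylo.no_loop D.a1 D.arc1.1 (by rw [D.arc1.2.1, D.arc1.2.2, he])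

lemma p2_ne_h : D.p2 ≠ D.h :=
  fun he => D.phylo.no_loop D.a2 D.arc2.1 (by rw [D.arc2.2.1, D.arc2.2.2, he])

lemma p1_mem : D.p1 ∈ G.verts := D.arc1.2.1 ▸ D.phylo.src_mem D.a1 D.arc1.1

lemma p2_mem : D.p2 ∈ G.verts := D.arc2.2.1 ▸ D.phylo.src_mem D.a2 D.arc2.1

lemma root_ne_h {r : ℕ} (hr : IsRootN G r) : r ≠ D.h := by
  intro he
  have h1 := D.retic.2.1
  have h2 := hr.2
  rw [he] at h2
  omega

/-- Path counts to vertices outside `B ∪ {h}` are unchanged. -/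
lemma nPaths_out {v : ℕ} (hv0 : v ∈ G.verts) (hv1 : v ∉ D.B) (hv2 : v ≠ D.h) (u : ℕ) :
    nPaths G' u v = nPaths G u v := by
  unfold nPaths
  congr 1
  ext l
  exact ⟨fun hw => (D.walk_out_from' hw hv0 hv1 hv2).1,
    fun hw => (D.walk_out_to' hw hv1 hv2).1⟩

/-- The key path-counting identity for leaves inside `B`. -/
lemma nPaths_split {r x : ℕ} (hr : IsRootN G r) (hx : x ∈ D.B) :
    nPaths G r x = nPaths G' r x + nPaths G' r (D.phi x) := by
  classical
  have hrB : r ∉ D.B := D.root_not_B hr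
  have hrh : r ≠ D.h := D.root_ne_h hr
  have hrphi : ∀ w ∈ D.B, r ≠ D.phi w := fun w hw he => D.phi_not_verts hw (he ▸ hr.1)
  set S1 : Set (List ℕ) := {l | IsWalk G l r D.p1} with hS1
  set S2 : Set (List ℕ) := {l | IsWalk G l r D.p2} with hS2
  set Q : Set (List ℕ) := {l | IsWalk G l D.c x} with hQ
  have hfS1 : S1.Finite := finite_walks D.phylo r D.p1
  have hfS2 : S2.Finite := finite_walks D.phylo r D.p2
  have hfQ : Q.Finite := finite_walks D.phylo D.c x
  have hQaset : ∀ l ∈ Q, ∀ a ∈ l, a ∈ arcsBelow G D.c :=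
    fun l hl => (D.walk_in_to' hl D.c_in_B).2.1
  have ha1S1 : ∀ l ∈ S1, D.a1 ∉ l := fun l hl => D.a1_not_mem_out hl D.p1_not_B D.p1_ne_h
  have ha1S2 : ∀ l ∈ S2, D.a1 ∉ l := fun l hl => D.a1_not_mem_out hl D.p2_not_B D.p2_ne_h
  have ha2S2 : ∀ l ∈ S2, D.a2 ∉ l := fun l hl => D.a2_not_mem_out hl D.p2_not_B D.p2_ne_h
  -- decomposition of G-walks
  have hW : {l | IsWalk G l r x} =
      (fun p : List ℕ × List ℕ => p.1 ++ D.a1 :: D.a0 :: p.2) '' (S1 ×ˢ Q) ∪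
      (fun p : List ℕ × List ℕ => p.1 ++ D.a2 :: D.a0 :: p.2) '' (S2 ×ˢ Q) := by
    ext l
    constructor
    · intro hw
      obtain ⟨l1, l2, rfl, hw1, hw2⟩ := D.crossing_G hw hx hrB
      rcases List.eq_nil_or_concat l1 with rfl | ⟨l1', e, rfl⟩
      · exact absurd hw1.1 hrh
      · rw [List.concat_eq_append] at hw1 ⊢
        obtain ⟨mid, hwa, hwb⟩ := isWalk_append_split D.phylo hw1
        have hte : G.tgt e = D.h := hwb.2.2.1
        have hse : G.src e = mid := hwb.2.1
        rcases D.arc_to_h hwb.1 hte with rfl | rfl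
        · left
          refine ⟨(l1', l2), ⟨by rw [hS1]; rwa [← hse, D.arc1.2.1] at hwa, hw2⟩, ?_⟩
          simp
        · right
          refine ⟨(l1', l2), ⟨by rw [hS2]; rwa [← hse, D.arc2.2.1] at hwa, hw2⟩, ?_⟩
          simp
    · rintro (⟨⟨l1, l2⟩, ⟨h1, h2⟩, rfl⟩ | ⟨⟨l1, l2⟩, ⟨h1, h2⟩, rfl⟩)
      · refine isWalk_append_of h1 ⟨D.arc1.1, D.arc1.2.1, ?_⟩
        rw [D.arc1.2.2]
        exact ⟨D.arc0.1, D.arc0.2.1, by rw [D.arc0.2.2]; exact h2⟩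
      · refine isWalk_append_of h1 ⟨D.arc2.1, D.arc2.2.1, ?_⟩
        rw [D.arc2.2.2]
        exact ⟨D.arc0.1, D.arc0.2.1, by rw [D.arc0.2.2]; exact h2⟩
  -- decomposition of G'-walks to x
  have hW1 : {l | IsWalk G' l r x} =
      (fun p : List ℕ × List ℕ => p.1 ++ D.a1 :: p.2) '' (S1 ×ˢ Q) := by
    ext l
    constructor
    · intro hw
      obtain ⟨l1, l2, rfl, hw1, hw2⟩ := D.crossing_G'_B hw hx hrB hrphi
      exact ⟨(l1, l2), ⟨(D.walk_out_from' hw1 D.p1_mem D.p1_not_B D.p1_ne_h).1,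
        (D.walk_in_from' hw2 D.c_in_B).1⟩, rfl⟩
    · rintro ⟨⟨l1, l2⟩, ⟨h1, h2⟩, rfl⟩
      refine isWalk_append_of (D.walk_out_to' h1 D.p1_not_B D.p1_ne_h).1
        ⟨D.a1_mem', D.s1, ?_⟩
      rw [D.t1]
      exact (D.walk_in_to' h2 D.c_in_B).1
  -- decomposition of G'-walks to the copy of x
  have hW2 : {l | IsWalk G' l r (D.phi x)} =
      (fun p : List ℕ × List ℕ => p.1 ++ D.a2 :: p.2.map D.psi) '' (S2 ×ˢ Q) := by
    ext l
    constructor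
    · intro hw
      obtain ⟨l1, l2, rfl, hw1, hw2⟩ := D.crossing_G'_phi hw hx hrB hrphi
      obtain ⟨l0, v, hmap, hphiv, hwalkG, hvB⟩ := D.walk_copy_from' hw2 D.c D.c_in_B rfl
      have hvx : x = v := D.injphi hx hvB hphiv
      refine ⟨(l1, l0), ⟨(D.walk_out_from' hw1 D.p2_mem D.p2_not_B D.p2_ne_h).1, ?_⟩, ?_⟩
      · rw [hQ]
        rw [← hvx] at hwalkG
        exact hwalkG
      · simp only []
        rw [← hmap]
    · rintro ⟨⟨l1, l2⟩, ⟨h1, h2⟩, rfl⟩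
      refine isWalk_append_of (D.walk_out_to' h1 D.p2_not_B D.p2_ne_h).1
        ⟨D.a2_mem', D.s2, ?_⟩
      rw [D.t2]
      exact D.walk_copy_to' h2 D.c_in_B
  -- injectivity of the assembling maps
  have hinj1 : Set.InjOn (fun p : List ℕ × List ℕ => p.1 ++ D.a1 :: D.a0 :: p.2)
      (S1 ×ˢ Q) := by
    rintro ⟨l1, l2⟩ ⟨h1, h2⟩ ⟨l1', l2'⟩ ⟨h1', h2'⟩ heq
    have heq2 : l1 ++ D.a1 :: D.a0 :: l2 = l1' ++ D.a1 :: D.a0 :: l2' := heq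
    obtain ⟨e1, e2⟩ := append_sep_inj heq2 (ha1S1 l1 h1) (ha1S1 l1' h1')
    simp only [List.cons.injEq] at e2
    exact Prod.ext e1 e2.2
  have hinj2 : Set.InjOn (fun p : List ℕ × List ℕ => p.1 ++ D.a2 :: D.a0 :: p.2)
      (S2 ×ˢ Q) := by
    rintro ⟨l1, l2⟩ ⟨h1, h2⟩ ⟨l1', l2'⟩ ⟨h1', h2'⟩ heq
    have heq2 : l1 ++ D.a2 :: D.a0 :: l2 = l1' ++ D.a2 :: D.a0 :: l2' := heq
    obtain ⟨e1, e2⟩ := append_sep_inj heq2 (ha2S2 l1 h1) (ha2S2 l1' h1')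
    simp only [List.cons.injEq] at e2
    exact Prod.ext e1 e2.2
  have hinj1' : Set.InjOn (fun p : List ℕ × List ℕ => p.1 ++ D.a1 :: p.2) (S1 ×ˢ Q) := by
    rintro ⟨l1, l2⟩ ⟨h1, h2⟩ ⟨l1', l2'⟩ ⟨h1', h2'⟩ heq
    have heq2 : l1 ++ D.a1 :: l2 = l1' ++ D.a1 :: l2' := heq
    obtain ⟨e1, e2⟩ := append_sep_inj heq2 (ha1S1 l1 h1) (ha1S1 l1' h1')
    exact Prod.ext e1 e2
  have hinj2' : Set.InjOn (fun p : List ℕ × List ℕ => p.1 ++ D.a2 :: p.2.map D.psi)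
      (S2 ×ˢ Q) := by
    rintro ⟨l1, l2⟩ ⟨h1, h2⟩ ⟨l1', l2'⟩ ⟨h1', h2'⟩ heq
    have heq2 : l1 ++ D.a2 :: l2.map D.psi = l1' ++ D.a2 :: l2'.map D.psi := heq
    obtain ⟨e1, e2⟩ := append_sep_inj heq2 (ha2S2 l1 h1) (ha2S2 l1' h1')
    exact Prod.ext e1 (D.map_psi_inj (hQaset l2 h2) (hQaset l2' h2') e2)
  -- disjointness
  have hdisj : Disjoint
      ((fun p : List ℕ × List ℕ => p.1 ++ D.a1 :: D.a0 :: p.2) '' (S1 ×ˢ Q))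
      ((fun p : List ℕ × List ℕ => p.1 ++ D.a2 :: D.a0 :: p.2) '' (S2 ×ˢ Q)) := by
    rw [Set.disjoint_left]
    rintro l ⟨⟨l1, l2⟩, ⟨h1, h2⟩, rfl⟩ ⟨⟨l1', l2'⟩, ⟨h1', h2'⟩, heq⟩
    have heq2 : l1' ++ D.a2 :: D.a0 :: l2' = l1 ++ D.a1 :: D.a0 :: l2 := heq
    have hmem : D.a1 ∈ l1' ++ D.a2 :: D.a0 :: l2' := by
      rw [heq2]
      simp
    rcases List.mem_append.mp hmem with hm | hm
    · exact ha1S2 l1' h1' hm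
    · rcases List.mem_cons.mp hm with hm2 | hm2
      · exact D.ne12 hm2
      · rcases List.mem_cons.mp hm2 with hm3 | hm3
        · exact D.ne01 hm3.symm
        · exact D.a1_not_aset (hQaset l2' h2' D.a1 hm3)
  -- counting
  have hcard1 : nPaths G r x = S1.ncard * Q.ncard + S2.ncard * Q.ncard := by
    rw [nPaths, hW, Set.ncard_union_eq hdisj ((hfS1.prod hfQ).image _)
      ((hfS2.prod hfQ).image _), Set.ncard_image_of_injOn hinj1,
      Set.ncard_image_of_injOn hinj2, ncard_sprod, ncard_sprod]
  have hcard2 : nPaths G' r x = S1.ncard * Q.ncard := by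
    rw [nPaths, hW1, Set.ncard_image_of_injOn hinj1', ncard_sprod]
  have hcard3 : nPaths G' r (D.phi x) = S2.ncard * Q.ncard := by
    rw [nPaths, hW2, Set.ncard_image_of_injOn hinj2', ncard_sprod]
  rw [hcard1, hcard2, hcard3]

lemma leaf_old_iff {v : ℕ} (hv : v ∈ G.verts) (hvh : v ≠ D.h) :
    IsLeafN G' v ↔ IsLeafN G v := by
  constructor
  · rintro ⟨_, hin, hout⟩
    exact ⟨hv, by rw [← D.inDeg_old_all hv hvh]; exact hin,
      by rw [← D.outDeg_old hv hvh]; exact hout⟩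
  · rintro ⟨_, hin, hout⟩
    exact ⟨D.old_mem_verts' hv hvh, by rw [D.inDeg_old_all hv hvh]; exact hin,
      by rw [D.outDeg_old hv hvh]; exact hout⟩

lemma leaf_copy_iff {w : ℕ} (hw : w ∈ D.B) :
    IsLeafN G' (D.phi w) ↔ IsLeafN G w := by
  constructor
  · rintro ⟨_, hin, hout⟩
    exact ⟨D.B_sub w hw, by rw [← D.inDeg_copy_all hw]; exact hin,
      by rw [← D.outDeg_copy hw]; exact hout⟩
  · rintro ⟨_, hin, hout⟩
    exact ⟨D.phi_mem_verts' hw, by rw [D.inDeg_copy_all hw]; exact hin,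
      by rw [D.outDeg_copy hw]; exact hout⟩

lemma h_not_leaf : ¬ IsLeafN G D.h := by
  rintro ⟨_, hin, _⟩
  have := D.retic.2.1
  omega

end SData

end SplitAux

/-- If `N` is a multiple-labelled network realizing a ploidy
profile `m` and `N'` is obtained from `N` by a single split operation, then `N'`
is a multiple-labelled network realizing `m`. -/
theorem split_preserves_realization (m : List ℕ) (hm : IsProfileL m)
    (N N' : MLNet) (hN : MLRealizes N m) (hsplit : SplitRel N N') :
    MLRealizes N' m := by
  classical
  obtain ⟨h, p1, p2, c, a0, a1, a2, phi, psi, hretic, harc0, hcut, harc1, harc2,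
    hne12, hne01, hne02, hinjphi, hfreshphi, hinjpsi, hfreshpsi, hverts, harcs,
    hkeep, hs1, ht1, hs2, ht2, hmapped, hlab_old, hlab_copy⟩ := hsplit
  obtain ⟨hphy, hlabs, hsums⟩ := hN
  set G := N.net with hG
  set G' := N'.net with hG'
  let D : SData G G' :=
    ⟨h, p1, p2, c, a0, a1, a2, phi, psi, hphy, hretic, harc0, hcut, harc1, harc2,
      hne12, hne01, hne02, hinjphi, hfreshphi, hinjpsi, hfreshpsi, hverts, harcs,
      hkeep, hs1, ht1, hs2, ht2, hmapped⟩
  -- identify the data of D with the names above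
  have hDh : D.h = h := rfl
  have hDc : D.c = c := rfl
  have hDphi : D.phi = phi := rfl
  refine ⟨D.phylo', ?_, ?_⟩
  · -- labels of leaves are in range
    intro v hv
    rcases D.mem_verts'.mp hv.1 with ⟨hmem, hneh⟩ | ⟨w, hwB, rfl⟩
    · rw [hlab_old v hmem hneh]
      exact hlabs v ((D.leaf_old_iff hmem hneh).mp hv)
    · rw [hlab_copy w hwB]
      exact hlabs w ((D.leaf_copy_iff hwB).mp hv)
  · -- path-count sums
    intro i hi r' hr'
    obtain ⟨r, hr, hru⟩ := hphy.root_exu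
    have hru' : ∀ x, IsRootN G x → x = r := fun x hx => hru x hx
    have hr'r : r' = r := D.root_unique' hr hru' hr'
    rw [hr'r]
    have hrB : r ∉ D.B := D.root_not_B hr
    set F : Finset ℕ := G.verts.filter (fun v => IsLeafN G v ∧ N.lab v = i) with hF
    set F' : Finset ℕ := G'.verts.filter (fun v => IsLeafN G' v ∧ N'.lab v = i) with hF'
    set Fb : Finset ℕ := F.filter (fun v => v ∈ D.B) with hFb
    set Fo : Finset ℕ := F.filter (fun v => v ∉ D.B) with hFo
    have hFmem : ∀ v ∈ F, v ∈ G.verts ∧ IsLeafN G v ∧ N.lab v = i := by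
      intro v hv
      have := Finset.mem_filter.mp hv
      exact ⟨this.1, this.2⟩
    have hFneh : ∀ v ∈ F, v ≠ D.h := by
      intro v hv heq
      exact D.h_not_leaf (heq ▸ (hFmem v hv).2.1)
    -- decomposition of the leaf set of G'
    have hsplitF : F' = F ∪ Fb.image D.phi := by
      ext v
      simp only [hF', Finset.mem_filter, Finset.mem_union, Finset.mem_image]
      constructor
      · rintro ⟨hv, hleaf, hlab⟩
        rcases D.mem_verts'.mp hv with ⟨hmem, hneh⟩ | ⟨w, hwB, rfl⟩
        · left
          rw [hF]
          refine Finset.mem_filter.mpr ⟨hmem, (D.leaf_old_iff hmem hneh).mp hleaf, ?_⟩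
          rw [← hlab_old v hmem hneh]
          exact hlab
        · right
          refine ⟨w, ?_, rfl⟩
          rw [hFb]
          refine Finset.mem_filter.mpr ⟨?_, hwB⟩
          rw [hF]
          refine Finset.mem_filter.mpr ⟨D.B_sub w hwB,
            (D.leaf_copy_iff hwB).mp hleaf, ?_⟩
          rw [← hlab_copy w hwB]
          exact hlab
      · rintro (hv | ⟨w, hw, rfl⟩)
        · obtain ⟨hmem, hleaf, hlab⟩ := hFmem v hv
          have hneh := hFneh v hv
          exact ⟨D.old_mem_verts' hmem hneh, (D.leaf_old_iff hmem hneh).mpr hleaf,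
            by rw [hlab_old v hmem hneh]; exact hlab⟩
        · have hwF : w ∈ F := (Finset.mem_filter.mp hw).1
          have hwB : w ∈ D.B := (Finset.mem_filter.mp hw).2
          obtain ⟨hmem, hleaf, hlab⟩ := hFmem w hwF
          exact ⟨D.phi_mem_verts' hwB, (D.leaf_copy_iff hwB).mpr hleaf,
            by rw [hlab_copy w hwB]; exact hlab⟩
    have hdisjF : Disjoint F (Fb.image D.phi) := by
      rw [Finset.disjoint_left]
      intro v hvF hvI
      obtain ⟨w, hw, heq⟩ := Finset.mem_image.mp hvI
      have hwB : w ∈ D.B := (Finset.mem_filter.mp hw).2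
      exact D.phi_not_verts hwB (heq ▸ (hFmem v hvF).1)
    have hinjFb : ∀ x ∈ Fb, ∀ y ∈ Fb, D.phi x = D.phi y → x = y := by
      intro x hx y hy hxy
      exact D.injphi (Finset.mem_filter.mp hx).2 (Finset.mem_filter.mp hy).2 hxy
    -- sum computation
    have hsum1 : ∑ v ∈ F', nPaths G' r v =
        (∑ v ∈ F, nPaths G' r v) + ∑ w ∈ Fb, nPaths G' r (D.phi w) := by
      rw [hsplitF, Finset.sum_union hdisjF, Finset.sum_image hinjFb]
    have hFsplit : Fo ∪ Fb = F := by
      rw [hFo, hFb, Finset.union_comm]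
      exact Finset.filter_union_filter_not_eq _ F
    have hdisjOB : Disjoint Fo Fb := by
      rw [Finset.disjoint_left]
      intro v hvo hvb
      exact (Finset.mem_filter.mp hvo).2 (Finset.mem_filter.mp hvb).2
    have hsum2 : ∑ v ∈ F, nPaths G' r v =
        (∑ v ∈ Fo, nPaths G' r v) + ∑ v ∈ Fb, nPaths G' r v := by
      rw [← hFsplit, Finset.sum_union hdisjOB]
    have hsumO : ∑ v ∈ Fo, nPaths G' r v = ∑ v ∈ Fo, nPaths G r v := by
      refine Finset.sum_congr rfl (fun v hv => ?_)
      have hvF : v ∈ F := (Finset.mem_filter.mp hv).1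
      have hvB : v ∉ D.B := (Finset.mem_filter.mp hv).2
      exact D.nPaths_out (hFmem v hvF).1 hvB (hFneh v hvF) r
    have hsumB : (∑ v ∈ Fb, nPaths G' r v) + ∑ w ∈ Fb, nPaths G' r (D.phi w) =
        ∑ v ∈ Fb, nPaths G r v := by
      rw [← Finset.sum_add_distrib]
      refine Finset.sum_congr rfl (fun v hv => ?_)
      exact (D.nPaths_split hr (Finset.mem_filter.mp hv).2).symm
    have htotal : ∑ v ∈ F', nPaths G' r v = ∑ v ∈ F, nPaths G r v := by
      rw [hsum1, hsum2, hsumO]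
      rw [add_assoc, hsumB, ← Finset.sum_union hdisjOB, hFsplit]
    rw [htotal]
    exact hsums i hi r hr

end Ploidy
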